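/- With the same setup, if α is irrational (so w_α is Sturmian), then there exist constants C₁, C₂ > 0 with C₁ n² ≤ c_n(A_α) ≤ C₂ n² for all sufficiently large n; in particular the variety generated by A_α has quadratic codimension growth. -/

import Mathlib

noncomputable section

open Filter Topology

/-- Is a free-magma element a single leaf? -/
def FreeMagma.isLeaf {X : Type*} : FreeMagma X → Bool
  | .of _ => true
  | .mul _ _ => false

/-- The number of occurrences of the subword `a·a` in a monomial in one generator `a`. -/
def countSq : FreeMagma Unit → ℕ
  | .of _ => 0
  | .mul x y => countSq x + countSq y + (if x.isLeaf && y.isLeaf then 1 else 0)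

variable (F : Type) [Field F] [CharZero F]

/-- The free nonassociative (non-unital) algebra on one generator `a`. -/
abbrev FA := FreeNonUnitalNonAssocAlgebra F Unit

/-- The monomial of `FA F` corresponding to a magma word. -/
def mono (m : FreeMagma Unit) : FA F := MonoidAlgebra.single m (1 : F)

/-- The relations ideal of `A`: the span of all monomials containing two or more
subwords equal to `a²`.  The algebra `A` of the paper is `FA F` modulo `relI F`. -/
def relI : Submodule F (FA F) :=
  Submodule.span F {x : FA F | ∃ m : FreeMagma Unit, 2 ≤ countSq m ∧ x = mono F m}

/-- Number of occurrences of the variable `i` in a magma word over `ℕ`. -/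
def occ : FreeMagma ℕ → ℕ → ℕ
  | .of j, i => if j = i then 1 else 0
  | .mul x y, i => occ x i + occ y i

/-- The free nonassociative algebra on countably many variables `x₀, x₁, …`. -/
abbrev FreeN := FreeNonUnitalNonAssocAlgebra F ℕ

/-- The monomial of `FreeN F` corresponding to a magma word. -/
def monoN (t : FreeMagma ℕ) : FreeN F := MonoidAlgebra.single t (1 : F)

/-- `P_n`: the space of multilinear polynomials in the variables `x₀, …, x_{n-1}`. -/
def Pmulti (n : ℕ) : Submodule F (FreeN F) :=
  Submodule.span F {x : FreeN F | ∃ t : FreeMagma ℕ,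
    (∀ i : ℕ, occ t i = if i < n then 1 else 0) ∧ x = monoN F t}

/-- The identities of the algebra `A = FA F / relI F`: polynomials vanishing under every
substitution of elements of `A`. -/
def IdA : Submodule F (FreeN F) :=
  ⨅ xs : ℕ → FA F,
    Submodule.comap (LinearMapClass.linearMap (FreeNonUnitalNonAssocAlgebra.lift F xs)) (relI F)

/-- The `n`-th codimension of `A`: the dimension of `P_n/(P_n ∩ Id(A))`. -/
def codimA (n : ℕ) : ℕ :=
  Module.finrank F (↥(Pmulti F n) ⧸ Submodule.comap (Pmulti F n).subtype (IdA F))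

/-- Apply a word in `L_a` (letter `0`) and `R_a` (letter `1`) to a magma element,
left-to-right. -/
def chain (t : FreeMagma Unit) : List (Fin 2) → FreeMagma Unit
  | [] => t
  | b :: rest => chain (if b = 1 then t * FreeMagma.of () else FreeMagma.of () * t) rest

/-- The monomial `a²`. -/
def aSq : FreeMagma Unit := FreeMagma.of () * FreeMagma.of ()

/-- `subt s m` : `s` occurs as a subterm of the magma word `m`. -/
def subt (s : FreeMagma Unit) : FreeMagma Unit → Prop
  | .of x => s = .of x
  | .mul a b => s = FreeMagma.mul a b ∨ subt s a ∨ subt s b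

/-- `u` is a factor of the infinite word `w`. -/
def IsFactor (u : List (Fin 2)) (w : ℕ → Fin 2) : Prop :=
  ∃ i : ℕ, ∀ j : ℕ, j < u.length → u.getD j 0 = w (i + j)

/-- Monomials lying in the ideal `I_w` of relations of `A_w`: those with two subwords `a²`,
or containing some `a²u(L_a,R_a)` with `u` not a factor of `w` as a subterm. -/
def badMono (w : ℕ → Fin 2) (m : FreeMagma Unit) : Prop :=
  2 ≤ countSq m ∨ ∃ u : List (Fin 2), ¬ IsFactor u w ∧ subt (chain aSq u) m

/-- The relations ideal of the algebra `A_w = A/I_w`, inside the free algebra. -/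
def relIW (w : ℕ → Fin 2) : Submodule F (FA F) :=
  Submodule.span F {x : FA F | ∃ m : FreeMagma Unit, badMono w m ∧ x = mono F m}

/-- The identities of `A_w`. -/
def IdW (w : ℕ → Fin 2) : Submodule F (FreeN F) :=
  ⨅ xs : ℕ → FA F,
    Submodule.comap (LinearMapClass.linearMap (FreeNonUnitalNonAssocAlgebra.lift F xs)) (relIW F w)

/-- The `n`-th codimension of `A_w`. -/
def codimW (w : ℕ → Fin 2) (n : ℕ) : ℕ :=
  Module.finrank F (↥(Pmulti F n) ⧸ Submodule.comap (Pmulti F n).subtype (IdW F w))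

/-- Number of `1`'s among `w 0, …, w (n-1)`. -/
def pcount (w : ℕ → Fin 2) (n : ℕ) : ℕ := ((Finset.range n).filter fun i => w i = 1).card

/-- The set of factors of length `n` of `w`, and the complexity function. -/
def Factors (w : ℕ → Fin 2) (n : ℕ) : Set (Fin n → Fin 2) :=
  {v | ∃ i : ℕ, ∀ j : Fin n, v j = w (i + j)}

noncomputable def Comp (w : ℕ → Fin 2) (n : ℕ) : ℕ := (Factors w n).ncard

/-! ### Part 1: combinatorics of magma words -/

open FreeMagma in
theorem FreeMagma.leaf_eq {m : FreeMagma Unit} (h : m.isLeaf = true) : m = FreeMagma.of () := by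
  cases m with
  | of x => rfl
  | mul x y => simp [FreeMagma.isLeaf] at h

theorem isLeaf_mul {X : Type*} (x y : FreeMagma X) : (x * y).isLeaf = false := rfl

theorem countSq_mul (x y : FreeMagma Unit) :
    countSq (x * y) = countSq x + countSq y + (if x.isLeaf && y.isLeaf then 1 else 0) := rfl

theorem one_le_countSq {m : FreeMagma Unit} (h : m.isLeaf = false) : 1 ≤ countSq m := by
  induction m with
  | ih1 x => simp [FreeMagma.isLeaf] at h
  | ih2 x y ihx ihy =>
    rw [countSq_mul]
    rcases hx : x.isLeaf with hx' | hx'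
    · have := ihx hx; omega
    rcases hy : y.isLeaf with hy' | hy'
    · have := ihy hy; omega
    · simp [hx, hy]

theorem one_le_countSq_mul (x y : FreeMagma Unit) : 1 ≤ countSq (x * y) := by
  rw [countSq_mul]
  rcases hx : x.isLeaf with _ | _
  · have := one_le_countSq hx; omega
  rcases hy : y.isLeaf with _ | _
  · have := one_le_countSq hy; omega
  · simp [hx, hy]

theorem countSq_mul_ge (x y : FreeMagma Unit) : countSq x + countSq y ≤ countSq (x * y) := by
  rw [countSq_mul]; omega

/-- substitution of `Unit`-magma words into an `ℕ`-magma word -/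
def subst : FreeMagma ℕ → (ℕ → FreeMagma Unit) → FreeMagma Unit
  | .of i, s => s i
  | .mul x y, s => subst x s * subst y s

@[simp] theorem subst_of (i : ℕ) (s : ℕ → FreeMagma Unit) : subst (.of i) s = s i := rfl
@[simp] theorem subst_mul (x y : FreeMagma ℕ) (s : ℕ → FreeMagma Unit) :
    subst (x * y) s = subst x s * subst y s := rfl

/-- the underlying shape of an `ℕ`-magma word -/
def shape : FreeMagma ℕ → FreeMagma Unit
  | .of _ => .of ()
  | .mul x y => .mul (shape x) (shape y)

@[simp] theorem shape_of (i : ℕ) : shape (.of i) = .of () := rfl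
@[simp] theorem shape_mul (x y : FreeMagma ℕ) : shape (x * y) = shape x * shape y := rfl

theorem isLeaf_shape (t : FreeMagma ℕ) : (shape t).isLeaf = t.isLeaf := by
  cases t <;> rfl

theorem countSq_shape_le_subst (t : FreeMagma ℕ) (s : ℕ → FreeMagma Unit) :
    countSq (shape t) ≤ countSq (subst t s) := by
  induction t with
  | ih1 i => simp [shape, countSq]
  | ih2 x y ihx ihy =>
    rw [shape_mul, subst_mul]
    rcases h1 : ((shape x).isLeaf && (shape y).isLeaf) with _ | _
    · rw [countSq_mul, h1]
      simp only [Bool.false_eq_true, if_false, add_zero]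
      exact le_trans (Nat.add_le_add ihx ihy) (countSq_mul_ge _ _)
    · have hx : (shape x).isLeaf = true := (Bool.and_eq_true _ _).mp h1 |>.1
      have hy : (shape y).isLeaf = true := (Bool.and_eq_true _ _).mp h1 |>.2
      have hx0 : countSq (shape x) = 0 := by rw [FreeMagma.leaf_eq hx]; rfl
      have hy0 : countSq (shape y) = 0 := by rw [FreeMagma.leaf_eq hy]; rfl
      have : countSq (shape x * shape y) = 1 := by rw [countSq_mul, hx0, hy0, h1]; rfl
      rw [this]
      exact one_le_countSq_mul _ _
/-! ### Part 2: chains (caterpillar monomials) -/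

theorem FreeMagma.mul_inj {X : Type*} {a b c d : FreeMagma X} (h : a * b = c * d) :
    a = c ∧ b = d := by
  injection h with h1 h2
  exact ⟨h1, h2⟩

theorem fin2_eq_zero_of_ne_one {b : Fin 2} (h : ¬ b = 1) : b = 0 := by
  fin_cases b
  · rfl
  · exact absurd rfl h

theorem chain_nil (t : FreeMagma Unit) : chain t [] = t := rfl

theorem chain_cons (t : FreeMagma Unit) (b : Fin 2) (r : List (Fin 2)) :
    chain t (b :: r) =
      chain (if b = 1 then t * FreeMagma.of () else FreeMagma.of () * t) r := rfl

theorem chain_append (t : FreeMagma Unit) (u v : List (Fin 2)) :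
    chain t (u ++ v) = chain (chain t u) v := by
  induction u generalizing t with
  | nil => rfl
  | cons b r ih => rw [List.cons_append, chain_cons, chain_cons, ih]

theorem chain_snoc (t : FreeMagma Unit) (u : List (Fin 2)) (b : Fin 2) :
    chain t (u ++ [b]) =
      if b = 1 then chain t u * FreeMagma.of () else FreeMagma.of () * chain t u := by
  rw [chain_append]; rfl

theorem isLeaf_chain {t : FreeMagma Unit} (u : List (Fin 2)) (h : t.isLeaf = false) :
    (chain t u).isLeaf = false := by
  induction u generalizing t with
  | nil => exact h
  | cons b r ih =>
    rw [chain_cons]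
    apply ih
    split <;> rfl

theorem isLeaf_chain_aSq (u : List (Fin 2)) : (chain aSq u).isLeaf = false :=
  isLeaf_chain u rfl

theorem chain_aSq_ne_leaf (u : List (Fin 2)) : chain aSq u ≠ FreeMagma.of () := by
  intro h
  have h2 := isLeaf_chain_aSq u
  rw [h] at h2
  simp [FreeMagma.isLeaf] at h2

theorem countSq_chain {t : FreeMagma Unit} (u : List (Fin 2)) (h : t.isLeaf = false) :
    countSq (chain t u) = countSq t := by
  induction u generalizing t with
  | nil => rfl
  | cons b r ih =>
    by_cases hb : b = (1:Fin 2)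
    · rw [chain_cons, if_pos hb, ih (by rfl), countSq_mul, h]
      simp [countSq]
    · rw [chain_cons, if_neg hb, ih (by rfl), countSq_mul, h]
      simp [countSq]

theorem countSq_chain_aSq (u : List (Fin 2)) : countSq (chain aSq u) = 1 := by
  rw [countSq_chain u (by rfl)]; rfl

theorem chain_aSq_inj : ∀ (u v : List (Fin 2)), chain aSq u = chain aSq v → u = v := by
  intro u
  induction u using List.reverseRecOn with
  | nil =>
    intro v
    induction v using List.reverseRecOn with
    | nil => intro _; rfl
    | append_singleton v c _ =>
      intro h
      exfalso
      rw [chain_nil, chain_snoc] at h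
      by_cases hc : c = (1:Fin 2)
      · rw [if_pos hc] at h
        have h2 := (FreeMagma.mul_inj h).1
        exact chain_aSq_ne_leaf v h2.symm
      · rw [if_neg hc] at h
        have h2 := (FreeMagma.mul_inj h).2
        exact chain_aSq_ne_leaf v h2.symm
  | append_singleton u b ih =>
    intro v
    induction v using List.reverseRecOn with
    | nil =>
      intro h
      exfalso
      rw [chain_nil, chain_snoc] at h
      by_cases hb : b = (1:Fin 2)
      · rw [if_pos hb] at h
        have h2 := (FreeMagma.mul_inj h).1
        exact chain_aSq_ne_leaf u h2
      · rw [if_neg hb] at h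
        have h2 := (FreeMagma.mul_inj h).2
        exact chain_aSq_ne_leaf u h2
    | append_singleton v c _ =>
      intro h
      rw [chain_snoc, chain_snoc] at h
      by_cases hb : b = (1:Fin 2) <;> by_cases hc : c = (1:Fin 2)
      · rw [if_pos hb, if_pos hc] at h
        rw [ih v (FreeMagma.mul_inj h).1, hb, hc]
      · rw [if_pos hb, if_neg hc] at h
        exact absurd (FreeMagma.mul_inj h).1 (chain_aSq_ne_leaf u)
      · rw [if_neg hb, if_pos hc] at h
        exact absurd (FreeMagma.mul_inj h).2 (chain_aSq_ne_leaf u)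
      · rw [if_neg hb, if_neg hc] at h
        rw [ih v (FreeMagma.mul_inj h).2, fin2_eq_zero_of_ne_one hb, fin2_eq_zero_of_ne_one hc]

theorem subt_of (s : FreeMagma Unit) (x : Unit) : subt s (.of x) = (s = .of x) := rfl

theorem subt_mul (s a b : FreeMagma Unit) :
    subt s (a * b) = (s = a * b ∨ subt s a ∨ subt s b) := rfl

theorem subt_refl (m : FreeMagma Unit) : subt m m := by
  cases m with
  | of x => rw [subt_of]
  | mul a b => exact Or.inl rfl

theorem subt_chain {x t : FreeMagma Unit} {u : List (Fin 2)} (h : subt x (chain t u)) :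
    subt x t ∨ x = FreeMagma.of () ∨
      ∃ p b, (p ++ [b]) <+: u ∧ x = chain t (p ++ [b]) := by
  induction u generalizing t with
  | nil => exact Or.inl h
  | cons c r ih =>
    rw [chain_cons] at h
    rcases ih h with h' | h' | ⟨p, b, hpre, hx⟩
    · by_cases hc : c = (1:Fin 2)
      · rw [if_pos hc, subt_mul] at h'
        rcases h' with rfl | h' | h'
        · refine Or.inr (Or.inr ⟨[], c, ⟨r, rfl⟩, ?_⟩)
          rw [List.nil_append, show chain t [c] =
            (if c = 1 then t * FreeMagma.of () else FreeMagma.of () * t) from rfl, if_pos hc]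
        · exact Or.inl h'
        · rw [subt_of] at h'
          exact Or.inr (Or.inl h')
      · rw [if_neg hc, subt_mul] at h'
        rcases h' with rfl | h' | h'
        · refine Or.inr (Or.inr ⟨[], c, ⟨r, rfl⟩, ?_⟩)
          rw [List.nil_append, show chain t [c] =
            (if c = 1 then t * FreeMagma.of () else FreeMagma.of () * t) from rfl, if_neg hc]
        · rw [subt_of] at h'
          exact Or.inr (Or.inl h')
        · exact Or.inl h'
    · exact Or.inr (Or.inl h')
    · refine Or.inr (Or.inr ⟨c :: p, b, ?_, ?_⟩)
      · obtain ⟨rest, hr⟩ := hpre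
        exact ⟨rest, by rw [← hr]; simp⟩
      · rw [List.cons_append, chain_cons]
        exact hx

theorem IsFactor_nil (w : ℕ → Fin 2) : IsFactor [] w :=
  ⟨0, fun j hj => by simp at hj⟩

theorem IsFactor.of_prefix {w : ℕ → Fin 2} {p u : List (Fin 2)} (hpre : p <+: u)
    (hu : IsFactor u w) : IsFactor p w := by
  obtain ⟨rest, rfl⟩ := hpre
  obtain ⟨i, hi⟩ := hu
  refine ⟨i, fun j hj => ?_⟩
  rw [← hi j (by rw [List.length_append]; omega)]
  rw [List.getD_eq_getElem?_getD, List.getD_eq_getElem?_getD,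
    List.getElem?_append_left hj]

theorem IsFactor_append_right {w : ℕ → Fin 2} {v u : List (Fin 2)}
    (h : IsFactor (v ++ u) w) : IsFactor u w := by
  obtain ⟨i, hi⟩ := h
  refine ⟨i + v.length, fun j hj => ?_⟩
  have h2 := hi (v.length + j) (by rw [List.length_append]; omega)
  rw [List.getD_eq_getElem?_getD, List.getElem?_append_right (by omega)] at h2
  rw [List.getD_eq_getElem?_getD]
  have e1 : v.length + j - v.length = j := by omega
  rw [e1] at h2
  rw [h2]
  ring_nf

theorem badMono_of_suffix {w : ℕ → Fin 2} {u : List (Fin 2)} (v : List (Fin 2))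
    (hu : ¬ IsFactor u w) : badMono w (chain aSq (v ++ u)) :=
  Or.inr ⟨v ++ u, fun hf => hu (IsFactor_append_right hf), subt_refl _⟩

theorem not_badMono_chain {w : ℕ → Fin 2} {s : List (Fin 2)} (hs : IsFactor s w) :
    ¬ badMono w (chain aSq s) := by
  rintro (h2 | ⟨u', hu', hsub⟩)
  · rw [countSq_chain_aSq] at h2
    omega
  · rcases subt_chain hsub with h | h | ⟨p, b, hpre, heq⟩
    · rw [show aSq = FreeMagma.of () * FreeMagma.of () from rfl, subt_mul] at h
      rcases h with h | h | h
      · have h0 : u' = [] := chain_aSq_inj _ _ h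
        rw [h0] at hu'
        exact hu' (IsFactor_nil w)
      · rw [subt_of] at h
        exact chain_aSq_ne_leaf _ h
      · rw [subt_of] at h
        exact chain_aSq_ne_leaf _ h
    · exact chain_aSq_ne_leaf _ h
    · have h0 : u' = p ++ [b] := chain_aSq_inj _ _ heq
      rw [h0] at hu'
      exact hu' (IsFactor.of_prefix hpre hs)

theorem eq_chain_of_countSq_le_one :
    ∀ (m : FreeMagma Unit), m.isLeaf = false → countSq m ≤ 1 → ∃ v, m = chain aSq v := by
  intro m
  induction m with
  | ih1 x => intro h _; simp [FreeMagma.isLeaf] at h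
  | ih2 x y ihx ihy =>
    intro _ hc
    rcases hx : x.isLeaf with _ | _
    · rcases hy : y.isLeaf with _ | _
      · exfalso
        have h1 := one_le_countSq hx
        have h2 := one_le_countSq hy
        rw [countSq_mul] at hc
        omega
      · obtain ⟨v, rfl⟩ := ihx hx (by rw [countSq_mul] at hc; omega)
        refine ⟨v ++ [1], ?_⟩
        rw [chain_snoc, if_pos rfl, FreeMagma.leaf_eq hy]
    · rcases hy : y.isLeaf with _ | _
      · obtain ⟨v, rfl⟩ := ihy hy (by rw [countSq_mul] at hc; omega)
        refine ⟨v ++ [0], ?_⟩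
        rw [chain_snoc, if_neg (by decide), FreeMagma.leaf_eq hx]
      · exact ⟨[], by rw [FreeMagma.leaf_eq hx, FreeMagma.leaf_eq hy]; rfl⟩
/-! ### Part 3: labelled caterpillars -/

def chainN : FreeMagma ℕ → List (Fin 2 × ℕ) → FreeMagma ℕ
  | c, [] => c
  | c, (p :: r) => chainN (if p.1 = 1 then c * .of p.2 else .of p.2 * c) r

theorem chainN_nil (c : FreeMagma ℕ) : chainN c [] = c := rfl

theorem chainN_cons (c : FreeMagma ℕ) (b : Fin 2) (k : ℕ) (r : List (Fin 2 × ℕ)) :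
    chainN c ((b, k) :: r) =
      chainN (if b = 1 then c * .of k else .of k * c) r := rfl

theorem chainN_append (c : FreeMagma ℕ) (l₁ l₂ : List (Fin 2 × ℕ)) :
    chainN c (l₁ ++ l₂) = chainN (chainN c l₁) l₂ := by
  induction l₁ generalizing c with
  | nil => rfl
  | cons p r ih => obtain ⟨b, k⟩ := p; rw [List.cons_append, chainN_cons, chainN_cons, ih]

theorem chainN_snoc (c : FreeMagma ℕ) (l : List (Fin 2 × ℕ)) (b : Fin 2) (k : ℕ) :
    chainN c (l ++ [(b, k)]) =
      if b = 1 then chainN c l * .of k else .of k * chainN c l := by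
  rw [chainN_append]; rfl

theorem subst_chainN_leaf (l : List (Fin 2 × ℕ)) (c : FreeMagma ℕ) (s : ℕ → FreeMagma Unit)
    (h : ∀ k ∈ l.map Prod.snd, s k = FreeMagma.of ()) :
    subst (chainN c l) s = chain (subst c s) (l.map Prod.fst) := by
  induction l generalizing c with
  | nil => rfl
  | cons p r ih =>
    obtain ⟨b, k⟩ := p
    rw [chainN_cons, ih _ (fun k' hk' => h k' (by simp [hk'])), List.map_cons, chain_cons]
    congr 1
    by_cases hb : b = 1
    · rw [if_pos hb, if_pos hb, subst_mul, subst_of, h k (by simp)]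
    · rw [if_neg hb, if_neg hb, subst_mul, subst_of, h k (by simp)]

theorem countSq_subst_step (c : FreeMagma ℕ) (s : ℕ → FreeMagma Unit) (b : Fin 2) (k : ℕ) :
    countSq (subst c s) ≤ countSq (subst (if b = 1 then c * .of k else .of k * c) s) := by
  by_cases hb : b = 1
  · rw [if_pos hb, subst_mul]
    exact le_trans (Nat.le_add_right _ _) (countSq_mul_ge _ _)
  · rw [if_neg hb, subst_mul, subst_of]
    exact le_trans (Nat.le_add_left _ _) (countSq_mul_ge _ _)

theorem countSq_subst_chainN_core (l : List (Fin 2 × ℕ)) (c : FreeMagma ℕ)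
    (s : ℕ → FreeMagma Unit) :
    countSq (subst c s) ≤ countSq (subst (chainN c l) s) := by
  induction l generalizing c with
  | nil => exact le_refl _
  | cons p r ih =>
    obtain ⟨b, k⟩ := p
    rw [chainN_cons]
    exact le_trans (countSq_subst_step c s b k) (ih _)

theorem countSq_subst_chainN_mem (l : List (Fin 2 × ℕ)) (c : FreeMagma ℕ)
    (s : ℕ → FreeMagma Unit) (k : ℕ) (hk : k ∈ l.map Prod.snd) :
    countSq (s k) + countSq (subst c s) ≤ countSq (subst (chainN c l) s) := by
  induction l generalizing c with
  | nil => simp at hk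
  | cons p r ih =>
    obtain ⟨b, k'⟩ := p
    rw [List.map_cons, List.mem_cons] at hk
    rw [chainN_cons]
    rcases hk with rfl | hk
    · refine le_trans ?_ (countSq_subst_chainN_core r _ s)
      by_cases hb : b = 1
      · rw [if_pos hb, subst_mul, subst_of]
        exact le_trans (by omega) (countSq_mul_ge _ _)
      · rw [if_neg hb, subst_mul, subst_of]
        exact le_trans (by omega) (countSq_mul_ge _ _)
    · exact le_trans (by have := countSq_subst_step c s b k'; omega) (ih _ hk)

theorem occ_of (j i : ℕ) : occ (.of j) i = if j = i then 1 else 0 := rfl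

theorem occ_mul (x y : FreeMagma ℕ) (i : ℕ) : occ (x * y) i = occ x i + occ y i := rfl

theorem occ_chainN (l : List (Fin 2 × ℕ)) (c : FreeMagma ℕ) (i : ℕ) :
    occ (chainN c l) i = occ c i + (l.map Prod.snd).count i := by
  induction l generalizing c with
  | nil => simp [chainN_nil]
  | cons p r ih =>
    obtain ⟨b, k⟩ := p
    have hstep : occ (if b = 1 then c * FreeMagma.of k else FreeMagma.of k * c) i
        = occ c i + (if k = i then 1 else 0) := by
      by_cases hb : b = 1
      · rw [if_pos hb, occ_mul, occ_of]
      · rw [if_neg hb, occ_mul, occ_of]; omega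
    rw [chainN_cons, ih, hstep, List.map_cons, List.count_cons]
    simp only [beq_iff_eq, Prod.snd]
    split_ifs <;> omega

theorem shape_chainN (l : List (Fin 2 × ℕ)) (c : FreeMagma ℕ) :
    shape (chainN c l) = chain (shape c) (l.map Prod.fst) := by
  induction l generalizing c with
  | nil => rfl
  | cons p r ih =>
    obtain ⟨b, k⟩ := p
    rw [chainN_cons, ih, List.map_cons, chain_cons]
    congr 1
    by_cases hb : b = 1
    · rw [if_pos hb, if_pos hb, shape_mul, shape_of]
    · rw [if_neg hb, if_neg hb, shape_mul, shape_of]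

theorem exists_chainN (t : FreeMagma ℕ) (hl : t.isLeaf = false)
    (hc : countSq (shape t) ≤ 1) :
    ∃ i j l, t = chainN (.of i * .of j) l := by
  induction t with
  | ih1 x => simp [FreeMagma.isLeaf] at hl
  | ih2 x y ihx ihy =>
    have hxy : countSq (shape x) + countSq (shape y) ≤ 1 := by
      have := countSq_mul_ge (shape x) (shape y)
      rw [shape_mul] at hc
      omega
    rcases hx : x.isLeaf with _ | _
    · rcases hy : y.isLeaf with _ | _
      · exfalso
        have h1 := one_le_countSq (by rw [isLeaf_shape]; exact hx)
        have h2 := one_le_countSq (by rw [isLeaf_shape]; exact hy)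
        omega
      · obtain ⟨k, rfl⟩ : ∃ k, y = FreeMagma.of k := by
          cases y with
          | of k => exact ⟨k, rfl⟩
          | mul a b => simp [FreeMagma.isLeaf] at hy
        obtain ⟨i, j, l, rfl⟩ := ihx hx (by omega)
        exact ⟨i, j, l ++ [(1, k)], by rw [chainN_snoc, if_pos rfl]⟩
    · rcases hy : y.isLeaf with _ | _
      · obtain ⟨k, rfl⟩ : ∃ k, x = FreeMagma.of k := by
          cases x with
          | of k => exact ⟨k, rfl⟩
          | mul a b => simp [FreeMagma.isLeaf] at hx
        obtain ⟨i, j, l, rfl⟩ := ihy hy (by omega)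
        exact ⟨i, j, l ++ [(0, k)], by rw [chainN_snoc, if_neg (by decide)]⟩
      · obtain ⟨k, rfl⟩ : ∃ k, x = FreeMagma.of k := by
          cases x with
          | of k => exact ⟨k, rfl⟩
          | mul a b => simp [FreeMagma.isLeaf] at hx
        obtain ⟨k', rfl⟩ : ∃ k', y = FreeMagma.of k' := by
          cases y with
          | of k' => exact ⟨k', rfl⟩
          | mul a b => simp [FreeMagma.isLeaf] at hy
        exact ⟨k, k', [], rfl⟩

/-- remaining variables -/
def others (n i j : ℕ) : List ℕ :=
  (List.range n).filter (fun k => decide (k ≠ i ∧ k ≠ j))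

theorem mem_others {n i j k : ℕ} : k ∈ others n i j ↔ k < n ∧ k ≠ i ∧ k ≠ j := by
  simp [others, List.mem_filter, List.mem_range, and_assoc]

theorem nodup_others (n i j : ℕ) : (others n i j).Nodup :=
  (List.nodup_range (n := n)).filter _

theorem length_others {n i j : ℕ} (hi : i < n) (hj : j < n) (hij : i ≠ j) :
    (others n i j).length = n - 2 := by
  have h1 : (others n i j).length = (others n i j).toFinset.card :=
    (List.toFinset_card_of_nodup (nodup_others n i j)).symm
  have h2 : (others n i j).toFinset = (Finset.range n) \ {i, j} := by
    ext k
    simp only [List.mem_toFinset, mem_others, Finset.mem_sdiff, Finset.mem_range,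
      Finset.mem_insert, Finset.mem_singleton]
    tauto
  rw [h1, h2, Finset.card_sdiff_of_subset]
  · rw [Finset.card_range]
    rw [Finset.card_insert_of_notMem (by simp [hij]), Finset.card_singleton]
  · intro k hk
    simp only [Finset.mem_insert, Finset.mem_singleton] at hk
    rcases hk with rfl | rfl <;> simp [Finset.mem_range, hi, hj]

/-- the canonical multilinear caterpillar monomial -/
def candT (n : ℕ) (u : List (Fin 2)) (i j : ℕ) : FreeMagma ℕ :=
  chainN (.of i * .of j) (u.zip (others n i j))

theorem snd_zip_others {n i j : ℕ} {u : List (Fin 2)} (hu : u.length = n - 2)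
    (hi : i < n) (hj : j < n) (hij : i ≠ j) :
    (u.zip (others n i j)).map Prod.snd = others n i j :=
  List.map_snd_zip (by rw [hu, length_others hi hj hij])

theorem fst_zip_others {n i j : ℕ} {u : List (Fin 2)} (hu : u.length = n - 2)
    (hi : i < n) (hj : j < n) (hij : i ≠ j) :
    (u.zip (others n i j)).map Prod.fst = u :=
  List.map_fst_zip (by rw [hu, length_others hi hj hij])

theorem occ_candT {n i j : ℕ} {u : List (Fin 2)} (hu : u.length = n - 2)
    (hi : i < n) (hj : j < n) (hij : i ≠ j) (k : ℕ) :
    occ (candT n u i j) k = if k < n then 1 else 0 := by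
  rw [candT, occ_chainN, snd_zip_others hu hi hj hij, occ_mul, occ_of, occ_of]
  by_cases hk : k < n
  · rw [if_pos hk]
    by_cases hki : k = i
    · subst hki
      rw [if_pos rfl, if_neg (Ne.symm hij),
        List.count_eq_zero_of_not_mem (by rw [mem_others]; tauto)]
    · by_cases hkj : k = j
      · subst hkj
        rw [if_neg (fun h => hki h.symm), if_pos rfl,
          List.count_eq_zero_of_not_mem (by rw [mem_others]; tauto)]
      · rw [if_neg (fun h => hki h.symm), if_neg (fun h => hkj h.symm),
          List.count_eq_one_of_mem (nodup_others n i j)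
            (by rw [mem_others]; exact ⟨hk, hki, hkj⟩)]
  · rw [if_neg hk, if_neg (by omega), if_neg (by omega),
      List.count_eq_zero_of_not_mem (by rw [mem_others]; omega)]
/-! ### Part 4: evaluation case analyses -/

theorem isLeaf_false_of_not_true {m : FreeMagma Unit} (h : ¬ m.isLeaf = true) :
    m.isLeaf = false := by
  cases hm : m.isLeaf
  · rfl
  · exact absurd hm h

theorem countSq_mul_leaf {x : FreeMagma Unit} (hx : x.isLeaf = false) :
    countSq (x * FreeMagma.of ()) = countSq x := by
  rw [countSq_mul, hx]; simp [countSq]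

theorem countSq_leaf_mul {x : FreeMagma Unit} (hx : x.isLeaf = false) :
    countSq (FreeMagma.of () * x) = countSq x := by
  rw [countSq_mul, hx]; simp [countSq]

theorem cat_snoc1 (v : List (Fin 2)) :
    chain aSq v * FreeMagma.of () = chain aSq (v ++ [1]) := by
  rw [chain_snoc, if_pos rfl]

theorem cat_snoc0 (v : List (Fin 2)) :
    FreeMagma.of () * chain aSq v = chain aSq (v ++ [0]) := by
  rw [chain_snoc, if_neg (by decide)]

theorem badMono_chain_chain {w : ℕ → Fin 2} {u : List (Fin 2)} (v : List (Fin 2)) (b : Fin 2)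
    (h : ¬ IsFactor (b :: u) w) :
    badMono w (chain (chain aSq (v ++ [b])) u) := by
  rw [← chain_append, show (v ++ [b]) ++ u = v ++ (b :: u) by simp]
  exact badMono_of_suffix v h

theorem badMono_chain_both_nonleaf {w : ℕ → Fin 2} {x y : FreeMagma Unit} (u : List (Fin 2))
    (hx : x.isLeaf = false) (hy : y.isLeaf = false) :
    badMono w (chain (x * y) u) := by
  left
  rw [countSq_chain u (isLeaf_mul _ _)]
  have h1 := one_le_countSq hx
  have h2 := one_le_countSq hy
  have h3 := countSq_mul_ge x y
  omega

theorem badMono_chain_left_nonleaf {w : ℕ → Fin 2} {x : FreeMagma Unit} {u : List (Fin 2)}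
    (hx : x.isLeaf = false) (hbu : ¬ IsFactor ((1:Fin 2) :: u) w) :
    badMono w (chain (x * FreeMagma.of ()) u) := by
  by_cases h2 : 2 ≤ countSq x
  · left
    rw [countSq_chain u (isLeaf_mul _ _), countSq_mul_leaf hx]
    exact h2
  · obtain ⟨v, rfl⟩ := eq_chain_of_countSq_le_one x hx (by omega)
    rw [cat_snoc1]
    exact badMono_chain_chain v 1 hbu

theorem badMono_chain_right_nonleaf {w : ℕ → Fin 2} {y : FreeMagma Unit} {u : List (Fin 2)}
    (hy : y.isLeaf = false) (hbu : ¬ IsFactor ((0:Fin 2) :: u) w) :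
    badMono w (chain (FreeMagma.of () * y) u) := by
  by_cases h2 : 2 ≤ countSq y
  · left
    rw [countSq_chain u (isLeaf_mul _ _), countSq_leaf_mul hy]
    exact h2
  · obtain ⟨v, rfl⟩ := eq_chain_of_countSq_le_one y hy (by omega)
    rw [cat_snoc0]
    exact badMono_chain_chain v 0 hbu

theorem two_le_countSq_chainN_var {i j k : ℕ} {l : List (Fin 2 × ℕ)}
    {s : ℕ → FreeMagma Unit} (hk : k ∈ l.map Prod.snd) (hlf : (s k).isLeaf = false) :
    2 ≤ countSq (subst (chainN (.of i * .of j) l) s) := by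
  have h1 := countSq_subst_chainN_mem l (.of i * .of j) s k hk
  have h2 := one_le_countSq hlf
  have h3 : 1 ≤ countSq (subst (FreeMagma.of i * FreeMagma.of j) s) := by
    rw [subst_mul]; exact one_le_countSq_mul _ _
  omega

theorem badMono_chainN_var {w : ℕ → Fin 2} {i j k : ℕ} {l : List (Fin 2 × ℕ)}
    {s : ℕ → FreeMagma Unit} (hk : k ∈ l.map Prod.snd) (hlf : (s k).isLeaf = false) :
    badMono w (subst (chainN (.of i * .of j) l) s) :=
  Or.inl (two_le_countSq_chainN_var hk hlf)

/-- identity (2): every monomial substitution instance of a caterpillar whose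
side-word is not a factor is a bad monomial. -/
theorem bad_subst_caterpillar {w : ℕ → Fin 2} {u : List (Fin 2)} (hu : ¬ IsFactor u w)
    (i j : ℕ) (l : List (Fin 2 × ℕ)) (hfst : l.map Prod.fst = u) (s : ℕ → FreeMagma Unit) :
    badMono w (subst (chainN (.of i * .of j) l) s) := by
  by_cases hall : ∀ k ∈ l.map Prod.snd, (s k).isLeaf = true
  · rw [subst_chainN_leaf _ _ _ (fun k hk => FreeMagma.leaf_eq (hall k hk)), hfst,
      subst_mul, subst_of, subst_of]
    rcases hsi : (s i).isLeaf with _ | _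
    · rcases hsj : (s j).isLeaf with _ | _
      · exact badMono_chain_both_nonleaf u hsi hsj
      · rw [FreeMagma.leaf_eq hsj]
        exact badMono_chain_left_nonleaf hsi
          (fun hf => hu (IsFactor_append_right (v := [1]) hf))
    · rw [FreeMagma.leaf_eq hsi]
      rcases hsj : (s j).isLeaf with _ | _
      · exact badMono_chain_right_nonleaf hsj
          (fun hf => hu (IsFactor_append_right (v := [0]) hf))
      · rw [FreeMagma.leaf_eq hsj,
          show FreeMagma.of () * FreeMagma.of () = chain aSq [] from rfl,
          ← chain_append, List.nil_append]
        exact badMono_of_suffix [] hu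
  · push_neg at hall
    obtain ⟨k, hk, hleaf⟩ := hall
    exact badMono_chainN_var hk (isLeaf_false_of_not_true hleaf)

/-- identity (3): two caterpillars with the same cherry, the same side-word, and the
same set of chain variables agree or are both bad under every monomial substitution. -/
theorem per_s_reorder {i j : ℕ} {l l' : List (Fin 2 × ℕ)} {u : List (Fin 2)}
    (hf1 : l.map Prod.fst = u) (hf2 : l'.map Prod.fst = u)
    (hmem : ∀ k, k ∈ l.map Prod.snd ↔ k ∈ l'.map Prod.snd) (s : ℕ → FreeMagma Unit) :
    subst (chainN (.of i * .of j) l) s = subst (chainN (.of i * .of j) l') s ∨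
      (2 ≤ countSq (subst (chainN (.of i * .of j) l) s) ∧
       2 ≤ countSq (subst (chainN (.of i * .of j) l') s)) := by
  by_cases hall : ∀ k ∈ l.map Prod.snd, (s k).isLeaf = true
  · left
    rw [subst_chainN_leaf _ _ _ (fun k hk => FreeMagma.leaf_eq (hall k hk)),
      subst_chainN_leaf _ _ _ (fun k hk => FreeMagma.leaf_eq (hall k ((hmem k).mpr hk))),
      hf1, hf2]
  · push_neg at hall
    obtain ⟨k, hk, hleaf⟩ := hall
    have hlf := isLeaf_false_of_not_true hleaf
    exact Or.inr ⟨two_le_countSq_chainN_var hk hlf,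
      two_le_countSq_chainN_var ((hmem k).mp hk) hlf⟩
/-! ### Part 5: the cherry-exchange identities, pointwise on monomial substitutions -/

theorem per_s_changeRight {w : ℕ → Fin 2} {n i j j' : ℕ} {u : List (Fin 2)}
    (hi : i < n) (hj : j < n) (hj' : j' < n) (hij : i ≠ j) (hij' : i ≠ j')
    (hu : u.length = n - 2) (h0u : ¬ IsFactor ((0:Fin 2) :: u) w) (s : ℕ → FreeMagma Unit) :
    subst (candT n u i j) s = subst (candT n u i j') s ∨
      (badMono w (subst (candT n u i j) s) ∧ badMono w (subst (candT n u i j') s)) := by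
  by_cases hjj : j = j'
  · left; rw [hjj]
  have hs1 := snd_zip_others hu hi hj hij
  have hs2 := snd_zip_others hu hi hj' hij'
  have hf1 := fst_zip_others hu hi hj hij
  have hf2 := fst_zip_others hu hi hj' hij'
  have mem1 : ∀ k, k ∈ (u.zip (others n i j)).map Prod.snd ↔ (k < n ∧ k ≠ i ∧ k ≠ j) := by
    intro k; rw [hs1, mem_others]
  have mem2 : ∀ k, k ∈ (u.zip (others n i j')).map Prod.snd ↔ (k < n ∧ k ≠ i ∧ k ≠ j') := by
    intro k; rw [hs2, mem_others]
  have ev1 : (∀ k ∈ (u.zip (others n i j)).map Prod.snd, s k = FreeMagma.of ()) →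
      subst (candT n u i j) s = chain (s i * s j) u := by
    intro h
    rw [candT, subst_chainN_leaf _ _ _ h, hf1, subst_mul, subst_of, subst_of]
  have ev2 : (∀ k ∈ (u.zip (others n i j')).map Prod.snd, s k = FreeMagma.of ()) →
      subst (candT n u i j') s = chain (s i * s j') u := by
    intro h
    rw [candT, subst_chainN_leaf _ _ _ h, hf2, subst_mul, subst_of, subst_of]
  by_cases hall : ∀ k, k < n → k ≠ i → k ≠ j → k ≠ j' → (s k).isLeaf = true
  · by_cases hsj : (s j).isLeaf = true
    · by_cases hsj' : (s j').isLeaf = true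
      · left
        have c1 : ∀ k ∈ (u.zip (others n i j)).map Prod.snd, s k = FreeMagma.of () := by
          intro k hk
          rw [mem1] at hk
          obtain ⟨h1, h2, h3⟩ := hk
          by_cases h4 : k = j'
          · exact FreeMagma.leaf_eq (h4 ▸ hsj')
          · exact FreeMagma.leaf_eq (hall k h1 h2 h3 h4)
        have c2 : ∀ k ∈ (u.zip (others n i j')).map Prod.snd, s k = FreeMagma.of () := by
          intro k hk
          rw [mem2] at hk
          obtain ⟨h1, h2, h4⟩ := hk
          by_cases h3 : k = j
          · exact FreeMagma.leaf_eq (h3 ▸ hsj)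
          · exact FreeMagma.leaf_eq (hall k h1 h2 h3 h4)
        rw [ev1 c1, ev2 c2, FreeMagma.leaf_eq hsj, FreeMagma.leaf_eq hsj']
      · -- s j leaf, s j' not a leaf
        right
        have hlf' := isLeaf_false_of_not_true hsj'
        constructor
        · exact badMono_chainN_var ((mem1 j').mpr
            ⟨hj', Ne.symm hij', fun h => hjj h.symm⟩) hlf'
        · have c2 : ∀ k ∈ (u.zip (others n i j')).map Prod.snd, s k = FreeMagma.of () := by
            intro k hk
            rw [mem2] at hk
            obtain ⟨h1, h2, h4⟩ := hk
            by_cases h3 : k = j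
            · exact FreeMagma.leaf_eq (h3 ▸ hsj)
            · exact FreeMagma.leaf_eq (hall k h1 h2 h3 h4)
          rw [ev2 c2]
          by_cases hsi : (s i).isLeaf = true
          · rw [FreeMagma.leaf_eq hsi]
            exact badMono_chain_right_nonleaf hlf' h0u
          · exact badMono_chain_both_nonleaf u (isLeaf_false_of_not_true hsi) hlf'
    · by_cases hsj' : (s j').isLeaf = true
      · -- s j' leaf, s j not a leaf
        right
        have hlf := isLeaf_false_of_not_true hsj
        constructor
        · have c1 : ∀ k ∈ (u.zip (others n i j)).map Prod.snd, s k = FreeMagma.of () := by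
            intro k hk
            rw [mem1] at hk
            obtain ⟨h1, h2, h3⟩ := hk
            by_cases h4 : k = j'
            · exact FreeMagma.leaf_eq (h4 ▸ hsj')
            · exact FreeMagma.leaf_eq (hall k h1 h2 h3 h4)
          rw [ev1 c1]
          by_cases hsi : (s i).isLeaf = true
          · rw [FreeMagma.leaf_eq hsi]
            exact badMono_chain_right_nonleaf hlf h0u
          · exact badMono_chain_both_nonleaf u (isLeaf_false_of_not_true hsi) hlf
        · exact badMono_chainN_var ((mem2 j).mpr ⟨hj, Ne.symm hij, hjj⟩) hlf
      · -- neither leaf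
        right
        exact ⟨badMono_chainN_var ((mem1 j').mpr ⟨hj', Ne.symm hij', fun h => hjj h.symm⟩)
            (isLeaf_false_of_not_true hsj'),
          badMono_chainN_var ((mem2 j).mpr ⟨hj, Ne.symm hij, hjj⟩)
            (isLeaf_false_of_not_true hsj)⟩
  · push_neg at hall
    obtain ⟨k, h1, h2, h3, h4, hleaf⟩ := hall
    have hlf := isLeaf_false_of_not_true hleaf
    exact Or.inr ⟨badMono_chainN_var ((mem1 k).mpr ⟨h1, h2, h3⟩) hlf,
      badMono_chainN_var ((mem2 k).mpr ⟨h1, h2, h4⟩) hlf⟩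

theorem per_s_changeLeft {w : ℕ → Fin 2} {n i i' j : ℕ} {u : List (Fin 2)}
    (hi : i < n) (hi' : i' < n) (hj : j < n) (hij : i ≠ j) (hi'j : i' ≠ j)
    (hu : u.length = n - 2) (h1u : ¬ IsFactor ((1:Fin 2) :: u) w) (s : ℕ → FreeMagma Unit) :
    subst (candT n u i j) s = subst (candT n u i' j) s ∨
      (badMono w (subst (candT n u i j) s) ∧ badMono w (subst (candT n u i' j) s)) := by
  by_cases hii : i = i'
  · left; rw [hii]
  have hs1 := snd_zip_others hu hi hj hij
  have hs2 := snd_zip_others hu hi' hj hi'j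
  have hf1 := fst_zip_others hu hi hj hij
  have hf2 := fst_zip_others hu hi' hj hi'j
  have mem1 : ∀ k, k ∈ (u.zip (others n i j)).map Prod.snd ↔ (k < n ∧ k ≠ i ∧ k ≠ j) := by
    intro k; rw [hs1, mem_others]
  have mem2 : ∀ k, k ∈ (u.zip (others n i' j)).map Prod.snd ↔ (k < n ∧ k ≠ i' ∧ k ≠ j) := by
    intro k; rw [hs2, mem_others]
  have ev1 : (∀ k ∈ (u.zip (others n i j)).map Prod.snd, s k = FreeMagma.of ()) →
      subst (candT n u i j) s = chain (s i * s j) u := by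
    intro h
    rw [candT, subst_chainN_leaf _ _ _ h, hf1, subst_mul, subst_of, subst_of]
  have ev2 : (∀ k ∈ (u.zip (others n i' j)).map Prod.snd, s k = FreeMagma.of ()) →
      subst (candT n u i' j) s = chain (s i' * s j) u := by
    intro h
    rw [candT, subst_chainN_leaf _ _ _ h, hf2, subst_mul, subst_of, subst_of]
  by_cases hall : ∀ k, k < n → k ≠ i → k ≠ i' → k ≠ j → (s k).isLeaf = true
  · by_cases hsi : (s i).isLeaf = true
    · by_cases hsi' : (s i').isLeaf = true
      · left
        have c1 : ∀ k ∈ (u.zip (others n i j)).map Prod.snd, s k = FreeMagma.of () := by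
          intro k hk
          rw [mem1] at hk
          obtain ⟨h1, h2, h3⟩ := hk
          by_cases h4 : k = i'
          · exact FreeMagma.leaf_eq (h4 ▸ hsi')
          · exact FreeMagma.leaf_eq (hall k h1 h2 h4 h3)
        have c2 : ∀ k ∈ (u.zip (others n i' j)).map Prod.snd, s k = FreeMagma.of () := by
          intro k hk
          rw [mem2] at hk
          obtain ⟨h1, h2, h3⟩ := hk
          by_cases h4 : k = i
          · exact FreeMagma.leaf_eq (h4 ▸ hsi)
          · exact FreeMagma.leaf_eq (hall k h1 h4 h2 h3)
        rw [ev1 c1, ev2 c2, FreeMagma.leaf_eq hsi, FreeMagma.leaf_eq hsi']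
      · -- s i leaf, s i' not a leaf
        right
        have hlf' := isLeaf_false_of_not_true hsi'
        constructor
        · exact badMono_chainN_var ((mem1 i').mpr
            ⟨hi', fun h => hii h.symm, hi'j⟩) hlf'
        · have c2 : ∀ k ∈ (u.zip (others n i' j)).map Prod.snd, s k = FreeMagma.of () := by
            intro k hk
            rw [mem2] at hk
            obtain ⟨h1, h2, h3⟩ := hk
            by_cases h4 : k = i
            · exact FreeMagma.leaf_eq (h4 ▸ hsi)
            · exact FreeMagma.leaf_eq (hall k h1 h4 h2 h3)
          rw [ev2 c2]
          by_cases hsj : (s j).isLeaf = true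
          · rw [FreeMagma.leaf_eq hsj]
            exact badMono_chain_left_nonleaf hlf' h1u
          · exact badMono_chain_both_nonleaf u hlf' (isLeaf_false_of_not_true hsj)
    · by_cases hsi' : (s i').isLeaf = true
      · right
        have hlf := isLeaf_false_of_not_true hsi
        constructor
        · have c1 : ∀ k ∈ (u.zip (others n i j)).map Prod.snd, s k = FreeMagma.of () := by
            intro k hk
            rw [mem1] at hk
            obtain ⟨h1, h2, h3⟩ := hk
            by_cases h4 : k = i'
            · exact FreeMagma.leaf_eq (h4 ▸ hsi')
            · exact FreeMagma.leaf_eq (hall k h1 h2 h4 h3)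
          rw [ev1 c1]
          by_cases hsj : (s j).isLeaf = true
          · rw [FreeMagma.leaf_eq hsj]
            exact badMono_chain_left_nonleaf hlf h1u
          · exact badMono_chain_both_nonleaf u hlf (isLeaf_false_of_not_true hsj)
        · exact badMono_chainN_var ((mem2 i).mpr ⟨hi, hii, hij⟩) hlf
      · right
        exact ⟨badMono_chainN_var ((mem1 i').mpr ⟨hi', fun h => hii h.symm, hi'j⟩)
            (isLeaf_false_of_not_true hsi'),
          badMono_chainN_var ((mem2 i).mpr ⟨hi, hii, hij⟩)
            (isLeaf_false_of_not_true hsi)⟩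
  · push_neg at hall
    obtain ⟨k, h1, h2, h3, h4, hleaf⟩ := hall
    have hlf := isLeaf_false_of_not_true hleaf
    exact Or.inr ⟨badMono_chainN_var ((mem1 k).mpr ⟨h1, h2, h4⟩) hlf,
      badMono_chainN_var ((mem2 k).mpr ⟨h1, h3, h4⟩) hlf⟩
set_option linter.unusedSectionVars false

/-! ### Part 6: evaluation of monomials, multilinearity machinery -/

theorem mono_mul (m₁ m₂ : FreeMagma Unit) :
    mono F m₁ * mono F m₂ = mono F (m₁ * m₂) := by
  rw [mono, mono, mono, MonoidAlgebra.single_mul_single, one_mul]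

theorem monoN_mul (x y : FreeMagma ℕ) :
    monoN F (x * y) = monoN F x * monoN F y := by
  rw [monoN, monoN, monoN, MonoidAlgebra.single_mul_single, one_mul]

theorem monoN_of (i : ℕ) : monoN F (.of i) = FreeNonUnitalNonAssocAlgebra.of F i := rfl

theorem lift_monoN_of (xs : ℕ → FA F) (i : ℕ) :
    FreeNonUnitalNonAssocAlgebra.lift F xs (monoN F (.of i)) = xs i := by
  rw [monoN_of]
  exact FreeNonUnitalNonAssocAlgebra.lift_of_apply F xs i

theorem lift_monoN_mul (xs : ℕ → FA F) (x y : FreeMagma ℕ) :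
    FreeNonUnitalNonAssocAlgebra.lift F xs (monoN F (x * y)) =
      FreeNonUnitalNonAssocAlgebra.lift F xs (monoN F x) *
        FreeNonUnitalNonAssocAlgebra.lift F xs (monoN F y) := by
  rw [monoN_mul, map_mul]

theorem lift_mono_subst (s : ℕ → FreeMagma Unit) (t : FreeMagma ℕ) :
    FreeNonUnitalNonAssocAlgebra.lift F (fun k => mono F (s k)) (monoN F t)
      = mono F (subst t s) := by
  induction t with
  | ih1 i => rw [lift_monoN_of, subst_of]
  | ih2 x y ihx ihy => rw [lift_monoN_mul, ihx, ihy, subst_mul, mono_mul]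

theorem lift_congr {xs ys : ℕ → FA F} (t : FreeMagma ℕ)
    (h : ∀ i, occ t i ≠ 0 → xs i = ys i) :
    FreeNonUnitalNonAssocAlgebra.lift F xs (monoN F t)
      = FreeNonUnitalNonAssocAlgebra.lift F ys (monoN F t) := by
  induction t with
  | ih1 i =>
    rw [lift_monoN_of, lift_monoN_of]
    exact h i (by rw [occ_of, if_pos rfl]; omega)
  | ih2 x y ihx ihy =>
    rw [lift_monoN_mul, lift_monoN_mul,
      ihx (fun i hi => h i (by rw [occ_mul]; omega)),
      ihy (fun i hi => h i (by rw [occ_mul]; omega))]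

theorem lift_update_add (t : FreeMagma ℕ) (k : ℕ) (hocc : occ t k = 1)
    (xs : ℕ → FA F) (y z : FA F) :
    FreeNonUnitalNonAssocAlgebra.lift F (Function.update xs k (y + z)) (monoN F t)
      = FreeNonUnitalNonAssocAlgebra.lift F (Function.update xs k y) (monoN F t)
        + FreeNonUnitalNonAssocAlgebra.lift F (Function.update xs k z) (monoN F t) := by
  induction t with
  | ih1 i =>
    have hik : i = k := by
      rw [occ_of] at hocc
      by_cases h : i = k
      · exact h
      · rw [if_neg h] at hocc; omega
    subst hik
    rw [lift_monoN_of, lift_monoN_of, lift_monoN_of, Function.update_self,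
      Function.update_self, Function.update_self]
  | ih2 x x' ihx ihx' =>
    rw [occ_mul] at hocc
    have hconst : ∀ (t' : FreeMagma ℕ), occ t' k = 0 → ∀ (v v' : FA F),
        FreeNonUnitalNonAssocAlgebra.lift F (Function.update xs k v) (monoN F t')
          = FreeNonUnitalNonAssocAlgebra.lift F (Function.update xs k v') (monoN F t') := by
      intro t' h0 v v'
      apply lift_congr
      intro i hi
      have : i ≠ k := fun h => hi (h ▸ h0)
      rw [Function.update_of_ne this, Function.update_of_ne this]
    rcases Nat.eq_zero_or_pos (occ x k) with h0 | hpos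
    · have h1 : occ x' k = 1 := by omega
      rw [lift_monoN_mul, lift_monoN_mul, lift_monoN_mul, ihx' h1,
        hconst x h0 (y + z) y]
      rw [mul_add]
      congr 2
      exact hconst x h0 y z
    · have h1 : occ x k = 1 := by omega
      have h0 : occ x' k = 0 := by omega
      rw [lift_monoN_mul, lift_monoN_mul, lift_monoN_mul, ihx h1,
        hconst x' h0 (y + z) y]
      rw [add_mul]
      congr 2
      exact hconst x' h0 y z

theorem lift_update_smul (t : FreeMagma ℕ) (k : ℕ) (hocc : occ t k = 1)
    (xs : ℕ → FA F) (c : F) (y : FA F) :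
    FreeNonUnitalNonAssocAlgebra.lift F (Function.update xs k (c • y)) (monoN F t)
      = c • FreeNonUnitalNonAssocAlgebra.lift F (Function.update xs k y) (monoN F t) := by
  induction t with
  | ih1 i =>
    have hik : i = k := by
      rw [occ_of] at hocc
      by_cases h : i = k
      · exact h
      · rw [if_neg h] at hocc; omega
    subst hik
    rw [lift_monoN_of, lift_monoN_of, Function.update_self, Function.update_self]
  | ih2 x x' ihx ihx' =>
    rw [occ_mul] at hocc
    have hconst : ∀ (t' : FreeMagma ℕ), occ t' k = 0 → ∀ (v v' : FA F),
        FreeNonUnitalNonAssocAlgebra.lift F (Function.update xs k v) (monoN F t')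
          = FreeNonUnitalNonAssocAlgebra.lift F (Function.update xs k v') (monoN F t') := by
      intro t' h0 v v'
      apply lift_congr
      intro i hi
      have : i ≠ k := fun h => hi (h ▸ h0)
      rw [Function.update_of_ne this, Function.update_of_ne this]
    rcases Nat.eq_zero_or_pos (occ x k) with h0 | hpos
    · have h1 : occ x' k = 1 := by omega
      rw [lift_monoN_mul, lift_monoN_mul, ihx' h1, hconst x h0 (c • y) y, mul_smul_comm]
    · have h1 : occ x k = 1 := by omega
      have h0 : occ x' k = 0 := by omega
      rw [lift_monoN_mul, lift_monoN_mul, ihx h1, hconst x' h0 (c • y) y, smul_mul_assoc]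

theorem span_mono_top : Submodule.span F (Set.range (mono F)) = ⊤ := by
  rw [Submodule.eq_top_iff']
  intro x
  induction x using MonoidAlgebra.induction with
  | zero => exact Submodule.zero_mem _
  | single_add a b f _ _ ih =>
    refine Submodule.add_mem _ ?_ ih
    have : MonoidAlgebra.single a b = b • mono F a := by
      rw [mono]; apply MonoidAlgebra.coeff_injective
      rw [MonoidAlgebra.coeff_smul, MonoidAlgebra.coeff_single, MonoidAlgebra.coeff_single,
        Finsupp.smul_single', mul_one]
    rw [this]
    exact Submodule.smul_mem _ _ (Submodule.subset_span ⟨a, rfl⟩)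

theorem occ_bound (t : FreeMagma ℕ) : ∃ N, ∀ i, N ≤ i → occ t i = 0 := by
  induction t with
  | ih1 j => exact ⟨j + 1, fun i hi => by rw [occ_of, if_neg (by omega)]⟩
  | ih2 x y ihx ihy =>
    obtain ⟨N1, h1⟩ := ihx
    obtain ⟨N2, h2⟩ := ihy
    refine ⟨max N1 N2, fun i hi => ?_⟩
    rw [occ_mul, h1 i (le_trans (le_max_left _ _) hi), h2 i (le_trans (le_max_right _ _) hi)]
/-! ### Part 7: membership in the T-ideal of identities -/

set_option linter.unusedSectionVars false

theorem toLinearMap_lift_apply (xs : ℕ → FA F) (z : FreeN F) :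
    LinearMapClass.linearMap (FreeNonUnitalNonAssocAlgebra.lift F xs) z
      = FreeNonUnitalNonAssocAlgebra.lift F xs z := rfl

theorem mem_IdW_iff (w : ℕ → Fin 2) (z : FreeN F) :
    z ∈ IdW F w ↔ ∀ xs : ℕ → FA F,
      FreeNonUnitalNonAssocAlgebra.lift F xs z ∈ relIW F w := by
  rw [IdW, Submodule.mem_iInf]
  constructor
  · intro h xs
    have := h xs
    rwa [Submodule.mem_comap, toLinearMap_lift_apply] at this
  · intro h xs
    rw [Submodule.mem_comap, toLinearMap_lift_apply]
    exact h xs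

theorem mono_mem_relIW {w : ℕ → Fin 2} {m : FreeMagma Unit} (h : badMono w m) :
    mono F m ∈ relIW F w :=
  Submodule.subset_span ⟨m, h, rfl⟩

theorem mul_mem_span_image {S₁ S₂ S₃ : Set (FreeMagma Unit)} {a b : FA F}
    (ha : a ∈ Submodule.span F (mono F '' S₁)) (hb : b ∈ Submodule.span F (mono F '' S₂))
    (hmul : ∀ m₁ ∈ S₁, ∀ m₂ ∈ S₂, m₁ * m₂ ∈ S₃) :
    a * b ∈ Submodule.span F (mono F '' S₃) := by
  induction ha using Submodule.span_induction with
  | mem x hx =>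
    obtain ⟨m₁, hm₁, rfl⟩ := hx
    induction hb using Submodule.span_induction with
    | mem y hy =>
      obtain ⟨m₂, hm₂, rfl⟩ := hy
      rw [mono_mul]
      exact Submodule.subset_span ⟨m₁ * m₂, hmul m₁ hm₁ m₂ hm₂, rfl⟩
    | zero => rw [mul_zero]; exact Submodule.zero_mem _
    | add y z _ _ ihy ihz => rw [mul_add]; exact Submodule.add_mem _ ihy ihz
    | smul c y _ ihy => rw [mul_smul_comm]; exact Submodule.smul_mem _ _ ihy
  | zero => rw [zero_mul]; exact Submodule.zero_mem _
  | add x y _ _ ihx ihy => rw [add_mul]; exact Submodule.add_mem _ ihx ihy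
  | smul c x _ ihx => rw [smul_mul_assoc]; exact Submodule.smul_mem _ _ ihx

theorem subst_congr {s s' : ℕ → FreeMagma Unit} (t : FreeMagma ℕ)
    (h : ∀ i, occ t i ≠ 0 → s i = s' i) : subst t s = subst t s' := by
  induction t with
  | ih1 i => rw [subst_of, subst_of]; exact h i (by rw [occ_of, if_pos rfl]; omega)
  | ih2 x y ihx ihy =>
    rw [subst_mul, subst_mul,
      ihx (fun i hi => h i (by rw [occ_mul]; omega)),
      ihy (fun i hi => h i (by rw [occ_mul]; omega))]

theorem lift_mem_span_subst (t : FreeMagma ℕ) (hocc : ∀ i, occ t i ≤ 1) (xs : ℕ → FA F) :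
    FreeNonUnitalNonAssocAlgebra.lift F xs (monoN F t)
      ∈ Submodule.span F (mono F '' {m | ∃ s, m = subst t s}) := by
  induction t with
  | ih1 i =>
    rw [lift_monoN_of]
    have hsub : Set.range (mono F) ⊆
        mono F '' {m | ∃ s : ℕ → FreeMagma Unit, m = subst (.of i) s} := by
      rintro x ⟨m, rfl⟩
      exact ⟨m, ⟨fun _ => m, rfl⟩, rfl⟩
    have htop : xs i ∈ Submodule.span F (Set.range (mono F)) := by
      rw [span_mono_top]; trivial
    exact Submodule.span_mono hsub htop
  | ih2 x y ihx ihy =>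
    rw [lift_monoN_mul]
    have hx : ∀ i, occ x i ≤ 1 := fun i => by have := hocc i; rw [occ_mul] at this; omega
    have hy : ∀ i, occ y i ≤ 1 := fun i => by have := hocc i; rw [occ_mul] at this; omega
    refine mul_mem_span_image F (ihx hx) (ihy hy) ?_
    rintro m₁ ⟨s₁, rfl⟩ m₂ ⟨s₂, rfl⟩
    refine ⟨fun k => if 0 < occ x k then s₁ k else s₂ k, ?_⟩
    rw [subst_mul]
    have e1 : subst x (fun k => if 0 < occ x k then s₁ k else s₂ k) = subst x s₁ :=
      subst_congr x (fun i hi => by simp only [if_pos (by omega : 0 < occ x i)])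
    have e2 : subst y (fun k => if 0 < occ x k then s₁ k else s₂ k) = subst y s₂ :=
      subst_congr y (fun i hi => by
        have := hocc i
        rw [occ_mul] at this
        simp only [if_neg (by omega : ¬ 0 < occ x i)])
    rw [e1, e2]
/-! ### Part 8: the concrete identities of `A_w` -/

set_option linter.unusedSectionVars false

theorem monoN_mem_IdW_of_two {w : ℕ → Fin 2} (t : FreeMagma ℕ) (hocc : ∀ i, occ t i ≤ 1)
    (h2 : 2 ≤ countSq (shape t)) : monoN F t ∈ IdW F w := by
  rw [mem_IdW_iff]
  intro xs
  refine Submodule.span_le.mpr ?_ (lift_mem_span_subst F t hocc xs)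
  rintro x ⟨m, ⟨s, rfl⟩, rfl⟩
  exact mono_mem_relIW F (Or.inl (le_trans h2 (countSq_shape_le_subst t s)))

theorem monoN_mem_IdW_cat {w : ℕ → Fin 2} {u : List (Fin 2)} (hu : ¬ IsFactor u w)
    (i j : ℕ) (l : List (Fin 2 × ℕ)) (hfst : l.map Prod.fst = u)
    (hocc : ∀ k, occ (chainN (.of i * .of j) l) k ≤ 1) :
    monoN F (chainN (.of i * .of j) l) ∈ IdW F w := by
  rw [mem_IdW_iff]
  intro xs
  refine Submodule.span_le.mpr ?_ (lift_mem_span_subst F _ hocc xs)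
  rintro x ⟨m, ⟨s, rfl⟩, rfl⟩
  exact mono_mem_relIW F (bad_subst_caterpillar hu i j l hfst s)

/-- The main multilinearity workhorse: a difference of two multilinear monomials with the
same multidegree is an identity of `A_w` provided all its monomial substitutions lie
in the relation module. -/
theorem diff_mem_IdW {w : ℕ → Fin 2} (t₁ t₂ : FreeMagma ℕ)
    (h1 : ∀ i, occ t₁ i ≤ 1) (h2 : ∀ i, occ t₂ i = occ t₁ i)
    (hs : ∀ s : ℕ → FreeMagma Unit, mono F (subst t₁ s) - mono F (subst t₂ s) ∈ relIW F w) :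
    monoN F t₁ - monoN F t₂ ∈ IdW F w := by
  rw [mem_IdW_iff]
  intro xs
  rw [map_sub]
  obtain ⟨N1, hN1⟩ := occ_bound t₁
  have key : ∀ (M : ℕ) (ys : ℕ → FA F), (∀ i, M ≤ i → ∃ m, ys i = mono F m) →
      FreeNonUnitalNonAssocAlgebra.lift F ys (monoN F t₁)
        - FreeNonUnitalNonAssocAlgebra.lift F ys (monoN F t₂) ∈ relIW F w := by
    intro M
    induction M with
    | zero =>
      intro ys hys
      choose m hm using fun i => hys i (Nat.zero_le i)
      have hysm : ys = fun i => mono F (m i) := funext hm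
      rw [hysm, lift_mono_subst, lift_mono_subst]
      exact hs m
    | succ M ih =>
      intro ys hys
      have hy' : ∀ (v : FA F), (∃ m, v = mono F m) →
          FreeNonUnitalNonAssocAlgebra.lift F (Function.update ys M v) (monoN F t₁)
            - FreeNonUnitalNonAssocAlgebra.lift F (Function.update ys M v) (monoN F t₂)
            ∈ relIW F w := by
        intro v hv
        refine ih _ (fun i hi => ?_)
        rcases Nat.eq_or_lt_of_le hi with rfl | hlt
        · rw [Function.update_self]; exact hv
        · rw [Function.update_of_ne (by omega)]
          exact hys i (by omega)
      have hgoal :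
          FreeNonUnitalNonAssocAlgebra.lift F (Function.update ys M (ys M)) (monoN F t₁)
            - FreeNonUnitalNonAssocAlgebra.lift F (Function.update ys M (ys M)) (monoN F t₂)
            ∈ relIW F w := by
        rcases Nat.lt_or_ge (occ t₁ M) 1 with h0 | h1'
        · have h01 : occ t₁ M = 0 := by omega
          have h02 : occ t₂ M = 0 := by rw [h2]; exact h01
          have e1 : FreeNonUnitalNonAssocAlgebra.lift F (Function.update ys M (ys M)) (monoN F t₁)
              = FreeNonUnitalNonAssocAlgebra.lift F
                  (Function.update ys M (mono F (FreeMagma.of ()))) (monoN F t₁) := by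
            apply lift_congr
            intro i hi
            have hiM : i ≠ M := fun h => hi (h ▸ h01)
            rw [Function.update_of_ne hiM, Function.update_of_ne hiM]
          have e2 : FreeNonUnitalNonAssocAlgebra.lift F (Function.update ys M (ys M)) (monoN F t₂)
              = FreeNonUnitalNonAssocAlgebra.lift F
                  (Function.update ys M (mono F (FreeMagma.of ()))) (monoN F t₂) := by
            apply lift_congr
            intro i hi
            have hiM : i ≠ M := fun h => hi (h ▸ h02)
            rw [Function.update_of_ne hiM, Function.update_of_ne hiM]
          rw [e1, e2]
          exact hy' _ ⟨_, rfl⟩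
        · have ho1 : occ t₁ M = 1 := le_antisymm (h1 M) h1'
          have ho2 : occ t₂ M = 1 := by rw [h2]; exact ho1
          have hall : ∀ v, v ∈ Submodule.span F (Set.range (mono F)) →
              FreeNonUnitalNonAssocAlgebra.lift F (Function.update ys M v) (monoN F t₁)
                - FreeNonUnitalNonAssocAlgebra.lift F (Function.update ys M v) (monoN F t₂)
                ∈ relIW F w := by
            intro v hv
            induction hv using Submodule.span_induction with
            | mem v hvr =>
              obtain ⟨m, rfl⟩ := hvr
              exact hy' _ ⟨m, rfl⟩
            | zero =>
              have z1 : FreeNonUnitalNonAssocAlgebra.lift F (Function.update ys M (0 : FA F))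
                  (monoN F t₁) = 0 := by
                have := lift_update_smul F t₁ M ho1 ys 0 (mono F (FreeMagma.of ()))
                rw [zero_smul, zero_smul] at this
                exact this
              have z2 : FreeNonUnitalNonAssocAlgebra.lift F (Function.update ys M (0 : FA F))
                  (monoN F t₂) = 0 := by
                have := lift_update_smul F t₂ M ho2 ys 0 (mono F (FreeMagma.of ()))
                rw [zero_smul, zero_smul] at this
                exact this
              rw [z1, z2, sub_zero]
              exact Submodule.zero_mem _
            | add v v' _ _ ihv ihv' =>
              rw [lift_update_add F t₁ M ho1 ys v v', lift_update_add F t₂ M ho2 ys v v']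
              have := Submodule.add_mem _ ihv ihv'
              convert this using 1
              abel
            | smul c v _ ihv =>
              rw [lift_update_smul F t₁ M ho1 ys c v, lift_update_smul F t₂ M ho2 ys c v,
                ← smul_sub]
              exact Submodule.smul_mem _ _ ihv
          exact hall (ys M) (by rw [span_mono_top]; trivial)
      rwa [Function.update_eq_self] at hgoal
  have e1 : FreeNonUnitalNonAssocAlgebra.lift F xs (monoN F t₁)
      = FreeNonUnitalNonAssocAlgebra.lift F
          (fun i => if i < N1 then xs i else mono F (FreeMagma.of ())) (monoN F t₁) := by
    apply lift_congr
    intro i hi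
    rw [if_pos (by by_contra hc; exact hi (hN1 i (by omega)))]
  have e2 : FreeNonUnitalNonAssocAlgebra.lift F xs (monoN F t₂)
      = FreeNonUnitalNonAssocAlgebra.lift F
          (fun i => if i < N1 then xs i else mono F (FreeMagma.of ())) (monoN F t₂) := by
    apply lift_congr
    intro i hi
    rw [if_pos (by by_contra hc; exact hi (by rw [h2]; exact hN1 i (by omega)))]
  rw [e1, e2]
  refine key N1 _ (fun i hi => ?_)
  refine ⟨FreeMagma.of (), ?_⟩
  rw [if_neg (by omega)]
/-! ### Part 9: coordinates on `relIW`, quotient helpers -/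

set_option linter.unusedSectionVars false

theorem relIW_coord_eq_zero {w : ℕ → Fin 2} {m : FreeMagma Unit} (hm : ¬ badMono w m)
    {x : FA F} (hx : x ∈ relIW F w) : x.coeff m = 0 := by
  induction hx using Submodule.span_induction with
  | mem y hy =>
    obtain ⟨m', hbad, rfl⟩ := hy
    have hne : m' ≠ m := fun h => hm (h ▸ hbad)
    rw [mono, MonoidAlgebra.coeff_single]
    exact Finsupp.single_eq_of_ne' hne
  | zero => rfl
  | add y z _ _ ihy ihz =>
    show (y + z).coeff m = 0
    rw [MonoidAlgebra.coeff_add, Finsupp.add_apply, ihy, ihz, add_zero]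
  | smul c y _ ihy =>
    show (c • y).coeff m = 0
    rw [MonoidAlgebra.coeff_smul, Finsupp.smul_apply, ihy, smul_zero]

theorem mono_coord (m m' : FreeMagma Unit) :
    (mono F m : FA F).coeff m' = if m = m' then 1 else 0 := by
  rw [mono, MonoidAlgebra.coeff_single]
  exact Finsupp.single_apply

/-- the quotient whose dimension is `codimW F w n` -/
abbrev QW (w : ℕ → Fin 2) (n : ℕ) :=
  ↥(Pmulti F n) ⧸ Submodule.comap (Pmulti F n).subtype (IdW F w)

open Classical in
noncomputable def cls (w : ℕ → Fin 2) (n : ℕ) (x : FreeN F) : QW F w n :=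
  if h : x ∈ Pmulti F n then Submodule.Quotient.mk ⟨x, h⟩ else 0

theorem cls_apply (w : ℕ → Fin 2) (n : ℕ) {x : FreeN F} (h : x ∈ Pmulti F n) :
    cls F w n x = Submodule.Quotient.mk ⟨x, h⟩ := dif_pos h

theorem cls_eq_of_diff {w : ℕ → Fin 2} {n : ℕ} {x y : FreeN F}
    (hx : x ∈ Pmulti F n) (hy : y ∈ Pmulti F n) (h : x - y ∈ IdW F w) :
    cls F w n x = cls F w n y := by
  rw [cls_apply F w n hx, cls_apply F w n hy, Submodule.Quotient.eq]
  rw [Submodule.mem_comap]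
  exact h

theorem cls_eq_zero {w : ℕ → Fin 2} {n : ℕ} {x : FreeN F}
    (hx : x ∈ Pmulti F n) (h : x ∈ IdW F w) : cls F w n x = 0 := by
  rw [cls_apply F w n hx, Submodule.Quotient.mk_eq_zero]
  rw [Submodule.mem_comap]
  exact h

theorem monoN_mem_Pmulti {n : ℕ} {t : FreeMagma ℕ}
    (h : ∀ i, occ t i = if i < n then 1 else 0) : monoN F t ∈ Pmulti F n :=
  Submodule.subset_span ⟨t, h, rfl⟩

theorem candT_mem_Pmulti {n i j : ℕ} {u : List (Fin 2)} (hu : u.length = n - 2)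
    (hi : i < n) (hj : j < n) (hij : i ≠ j) :
    monoN F (candT n u i j) ∈ Pmulti F n :=
  monoN_mem_Pmulti F (occ_candT hu hi hj hij)
/-! ### Part 10: reduction of the quotient to canonical classes -/

set_option linter.unusedSectionVars false

def pickNE (i : ℕ) : ℕ := if i = 0 then 1 else 0

theorem pickNE_ne (i : ℕ) : pickNE i ≠ i := by
  rw [pickNE]; split_ifs with h <;> omega

theorem pickNE_lt {n : ℕ} (hn : 2 ≤ n) (i : ℕ) : pickNE i < n := by
  rw [pickNE]; split_ifs <;> omega

theorem cls_span {w : ℕ → Fin 2} {n : ℕ} (S : Set (QW F w n))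
    (hgen : ∀ t : FreeMagma ℕ, (∀ i, occ t i = if i < n then 1 else 0) →
      cls F w n (monoN F t) ∈ Submodule.span F S) :
    ∀ x, x ∈ Pmulti F n → cls F w n x ∈ Submodule.span F S := by
  intro x hx
  induction hx using Submodule.span_induction with
  | mem y hy =>
    obtain ⟨t, hocc, rfl⟩ := hy
    exact hgen t hocc
  | zero =>
    have : cls F w n (0 : FreeN F) = 0 := by
      rw [cls_apply F w n (Submodule.zero_mem _)]
      exact (Submodule.Quotient.mk_eq_zero _).mpr (Submodule.zero_mem _)
    rw [this]
    exact Submodule.zero_mem _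
  | add y z hy hz ihy ihz =>
    have : cls F w n (y + z) = cls F w n y + cls F w n z := by
      rw [cls_apply F w n (Submodule.add_mem _ hy hz), cls_apply F w n hy,
        cls_apply F w n hz, ← Submodule.Quotient.mk_add]
      rfl
    rw [this]
    exact Submodule.add_mem _ ihy ihz
  | smul c y hy ihy =>
    have : cls F w n (c • y) = c • cls F w n y := by
      rw [cls_apply F w n (Submodule.smul_mem _ c hy), cls_apply F w n hy,
        ← Submodule.Quotient.mk_smul]
      rfl
    rw [this]
    exact Submodule.smul_mem _ _ ihy

theorem cls_changeRight {w : ℕ → Fin 2} {n i j j' : ℕ} {u : List (Fin 2)}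
    (hu : u.length = n - 2) (hi : i < n) (hj : j < n) (hj' : j' < n)
    (hij : i ≠ j) (hij' : i ≠ j') (h0u : ¬ IsFactor ((0:Fin 2) :: u) w) :
    cls F w n (monoN F (candT n u i j)) = cls F w n (monoN F (candT n u i j')) := by
  refine cls_eq_of_diff F (candT_mem_Pmulti F hu hi hj hij)
    (candT_mem_Pmulti F hu hi hj' hij') ?_
  refine diff_mem_IdW F _ _ (fun k => by rw [occ_candT hu hi hj hij]; split <;> omega)
    (fun k => by rw [occ_candT hu hi hj hij, occ_candT hu hi hj' hij']) ?_
  intro s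
  rcases per_s_changeRight hi hj hj' hij hij' hu h0u s with heq | ⟨hb1, hb2⟩
  · rw [heq, sub_self]
    exact Submodule.zero_mem _
  · exact Submodule.sub_mem _ (mono_mem_relIW F hb1) (mono_mem_relIW F hb2)

theorem cls_changeLeft {w : ℕ → Fin 2} {n i i' j : ℕ} {u : List (Fin 2)}
    (hu : u.length = n - 2) (hi : i < n) (hi' : i' < n) (hj : j < n)
    (hij : i ≠ j) (hi'j : i' ≠ j) (h1u : ¬ IsFactor ((1:Fin 2) :: u) w) :
    cls F w n (monoN F (candT n u i j)) = cls F w n (monoN F (candT n u i' j)) := by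
  refine cls_eq_of_diff F (candT_mem_Pmulti F hu hi hj hij)
    (candT_mem_Pmulti F hu hi' hj hi'j) ?_
  refine diff_mem_IdW F _ _ (fun k => by rw [occ_candT hu hi hj hij]; split <;> omega)
    (fun k => by rw [occ_candT hu hi hj hij, occ_candT hu hi' hj hi'j]) ?_
  intro s
  rcases per_s_changeLeft hi hi' hj hij hi'j hu h1u s with heq | ⟨hb1, hb2⟩
  · rw [heq, sub_self]
    exact Submodule.zero_mem _
  · exact Submodule.sub_mem _ (mono_mem_relIW F hb1) (mono_mem_relIW F hb2)

/-- reduction of an arbitrary multilinear monomial to a caterpillar class -/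
theorem gen_reduce {w : ℕ → Fin 2} {n : ℕ} (hn : 5 ≤ n) (t : FreeMagma ℕ)
    (hocc : ∀ i, occ t i = if i < n then 1 else 0) :
    cls F w n (monoN F t) = 0 ∨
    ∃ (u : List (Fin 2)) (i j : ℕ), u.length = n - 2 ∧ i < n ∧ j < n ∧ i ≠ j ∧
      IsFactor u w ∧ cls F w n (monoN F t) = cls F w n (monoN F (candT n u i j)) := by
  have hocc1 : ∀ i, occ t i ≤ 1 := fun i => by rw [hocc]; split <;> omega
  have hleaf : t.isLeaf = false := by
    cases t with
    | of k =>
      exfalso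
      have h0 := hocc 0
      have h1 := hocc 1
      rw [occ_of] at h0 h1
      rw [if_pos (by omega : (0:ℕ) < n)] at h0
      rw [if_pos (by omega : (1:ℕ) < n)] at h1
      split_ifs at h0 h1 <;> omega
    | mul x y => rfl
  by_cases h2 : 2 ≤ countSq (shape t)
  · exact Or.inl (cls_eq_zero F (monoN_mem_Pmulti F hocc)
      (monoN_mem_IdW_of_two F t hocc1 h2))
  · obtain ⟨i, j, l, rfl⟩ := exists_chainN t hleaf (by omega)
    have hocc' : ∀ k, (if i = k then 1 else 0) + (if j = k then 1 else 0)
        + (l.map Prod.snd).count k = (if k < n then 1 else 0) := by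
      intro k
      have h := hocc k
      rw [occ_chainN, occ_mul, occ_of, occ_of] at h
      omega
    have hi : i < n := by
      by_contra hc
      have h := hocc' i
      split_ifs at h <;> omega
    have hj : j < n := by
      by_contra hc
      have h := hocc' j
      split_ifs at h <;> omega
    have hij : i ≠ j := by
      by_contra hc
      have h := hocc' i
      split_ifs at h <;> omega
    have memsnd : ∀ k, k ∈ l.map Prod.snd ↔ (k < n ∧ k ≠ i ∧ k ≠ j) := by
      intro k
      rw [← List.count_pos_iff]
      have h := hocc' k
      constructor
      · intro hpos
        split_ifs at h <;> exact ⟨by omega, by omega, by omega⟩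
      · rintro ⟨ha, hb, hc⟩
        rw [if_neg (fun hh => hb hh.symm), if_neg (fun hh => hc hh.symm), if_pos ha] at h
        omega
    have hnodup : (l.map Prod.snd).Nodup := by
      rw [List.nodup_iff_count_le_one]
      intro k
      have h := hocc' k
      split_ifs at h <;> omega
    have hlen : l.length = n - 2 := by
      have h1 : (l.map Prod.snd).length = l.length := List.length_map _
      have h2' : (l.map Prod.snd).toFinset.card = (l.map Prod.snd).length :=
        List.toFinset_card_of_nodup hnodup
      have h3 : (l.map Prod.snd).toFinset = (others n i j).toFinset := by
        ext k
        rw [List.mem_toFinset, List.mem_toFinset, memsnd, mem_others]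
      have h4 : (others n i j).toFinset.card = (others n i j).length :=
        List.toFinset_card_of_nodup (nodup_others n i j)
      have h5 := length_others hi hj hij
      rw [h3, h4] at h2'
      omega
    set u := l.map Prod.fst with hu_def
    have hu : u.length = n - 2 := by rw [hu_def, List.length_map, hlen]
    by_cases hfac : IsFactor u w
    · right
      refine ⟨u, i, j, hu, hi, hj, hij, hfac, ?_⟩
      refine cls_eq_of_diff F (monoN_mem_Pmulti F hocc)
        (candT_mem_Pmulti F hu hi hj hij) ?_
      refine diff_mem_IdW F _ _ hocc1
        (fun k => by rw [occ_candT hu hi hj hij, hocc k]) ?_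
      intro s
      rcases per_s_reorder (i := i) (j := j) rfl (fst_zip_others hu hi hj hij)
        (fun k => by rw [memsnd, snd_zip_others hu hi hj hij, mem_others]) s with
        heq | ⟨hb1, hb2⟩
      · rw [candT] at *
        rw [heq, sub_self]
        exact Submodule.zero_mem _
      · exact Submodule.sub_mem _ (mono_mem_relIW F (Or.inl hb1))
          (mono_mem_relIW F (Or.inl hb2))
    · left
      exact cls_eq_zero F (monoN_mem_Pmulti F hocc)
        (monoN_mem_IdW_cat F hfac i j l rfl (fun k => by
          rw [show occ (chainN (FreeMagma.of i * FreeMagma.of j) l) k = occ (chainN (.of i * .of j) l) k from rfl]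
          rw [hocc k]; split <;> omega))
/-! ### Part 11: counting factors -/

set_option linter.unusedSectionVars false

def factorsL (w : ℕ → Fin 2) (m : ℕ) : Set (List (Fin 2)) :=
  {u | u.length = m ∧ IsFactor u w}

theorem factorsL_eq_image (w : ℕ → Fin 2) (m : ℕ) :
    factorsL w m = (fun v : Fin m → Fin 2 => List.ofFn v) '' Factors w m := by
  ext u
  constructor
  · rintro ⟨hlen, i, hi⟩
    refine ⟨fun j => u.getD j 0, ⟨i, fun j => hi j (by omega)⟩, ?_⟩
    apply List.ext_getElem (by rw [List.length_ofFn, hlen])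
    intro k h1 h2
    rw [List.getElem_ofFn]
    rw [← List.getD_eq_getElem u 0 h2]
  · rintro ⟨v, ⟨i, hv⟩, rfl⟩
    refine ⟨List.length_ofFn (f := v), i, fun j hj => ?_⟩
    rw [List.length_ofFn] at hj
    rw [List.getD_eq_getElem _ 0 (by rw [List.length_ofFn]; exact hj), List.getElem_ofFn]
    exact hv ⟨j, hj⟩

theorem factorsL_finite (w : ℕ → Fin 2) (m : ℕ) : (factorsL w m).Finite := by
  rw [factorsL_eq_image]
  exact (Set.toFinite _).image _

theorem factorsL_ncard (w : ℕ → Fin 2) (m : ℕ) : (factorsL w m).ncard = Comp w m := by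
  rw [factorsL_eq_image, Set.ncard_image_of_injective _ List.ofFn_injective, Comp]

noncomputable def FmF (w : ℕ → Fin 2) (m : ℕ) : Finset (List (Fin 2)) :=
  (factorsL_finite w m).toFinset

theorem mem_FmF {w : ℕ → Fin 2} {m : ℕ} {u : List (Fin 2)} :
    u ∈ FmF w m ↔ u.length = m ∧ IsFactor u w := by
  rw [FmF, Set.Finite.mem_toFinset]
  exact Iff.rfl

theorem FmF_card {w : ℕ → Fin 2} (hst : ∀ k, 1 ≤ k → Comp w k = k + 1)
    {m : ℕ} (hm : 1 ≤ m) : (FmF w m).card = m + 1 := by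
  rw [FmF, ← Set.ncard_eq_toFinset_card _ (factorsL_finite w m), factorsL_ncard, hst m hm]

open Classical in
noncomputable def specialF (w : ℕ → Fin 2) (m : ℕ) : Finset (List (Fin 2)) :=
  (FmF w m).filter (fun u => IsFactor ((0:Fin 2) :: u) w ∧ IsFactor ((1:Fin 2) :: u) w)

open Classical in
noncomputable def extF (w : ℕ → Fin 2) (m : ℕ) : Finset (List (Fin 2)) :=
  (FmF w m).filter (fun u => ∃ b : Fin 2, IsFactor (b :: u) w)

theorem exists_left_ext {w : ℕ → Fin 2} {m : ℕ} {u : List (Fin 2)}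
    (hu : u ∈ FmF w m) (hne : u ≠ List.ofFn (fun j : Fin m => w j)) :
    ∃ b, (b :: u) ∈ FmF w (m + 1) := by
  obtain ⟨hlen, i, hi⟩ := mem_FmF.mp hu
  rcases Nat.eq_zero_or_pos i with rfl | hpos
  · exfalso
    apply hne
    apply List.ext_getElem (by rw [List.length_ofFn, hlen])
    intro k h1 h2
    have hk := hi k h1
    rw [List.getD_eq_getElem u 0 h1] at hk
    rw [List.getElem_ofFn, hk]
    norm_num
  · refine ⟨w (i - 1), ?_⟩
    rw [mem_FmF]
    refine ⟨by rw [List.length_cons, hlen], i - 1, fun j hj => ?_⟩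
    cases j with
    | zero =>
      show w (i - 1) = w (i - 1 + 0)
      rw [Nat.add_zero]
    | succ k =>
      rw [List.length_cons] at hj
      have hk := hi k (by omega)
      show u.getD k 0 = w (i - 1 + (k + 1))
      rw [hk]
      congr 1
      omega

theorem specialF_card_le {w : ℕ → Fin 2} (hst : ∀ k, 1 ≤ k → Comp w k = k + 1)
    {m : ℕ} (hm : 1 ≤ m) : (specialF w m).card ≤ 2 := by
  classical
  set pref := List.ofFn (fun j : Fin m => w j) with hpref
  set base := ((FmF w m) \ (specialF w m)).erase pref with hbase
  have hext : ∀ u ∈ base, ∃ b, (b :: u) ∈ FmF w (m+1) := by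
    intro u hu
    exact exists_left_ext (Finset.mem_sdiff.mp (Finset.mem_of_mem_erase hu)).1
      (Finset.ne_of_mem_erase hu)
  choose ext hextmem using hext
  set A := (specialF w m).image (fun u => (0:Fin 2) :: u) with hA
  set B := (specialF w m).image (fun u => (1:Fin 2) :: u) with hB
  set C := base.attach.image (fun u => ext u.1 u.2 :: u.1) with hC
  have hspec : ∀ u ∈ specialF w m, u ∈ FmF w m ∧ IsFactor ((0:Fin 2)::u) w ∧
      IsFactor ((1:Fin 2)::u) w := by
    intro u hu
    have h := Finset.mem_filter.mp hu
    exact ⟨h.1, h.2⟩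
  have hAsub : A ⊆ FmF w (m+1) := by
    intro x hx
    obtain ⟨u, hu, rfl⟩ := Finset.mem_image.mp hx
    obtain ⟨h1, h2, _⟩ := hspec u hu
    exact mem_FmF.mpr ⟨by rw [List.length_cons, (mem_FmF.mp h1).1], h2⟩
  have hBsub : B ⊆ FmF w (m+1) := by
    intro x hx
    obtain ⟨u, hu, rfl⟩ := Finset.mem_image.mp hx
    obtain ⟨h1, _, h3⟩ := hspec u hu
    exact mem_FmF.mpr ⟨by rw [List.length_cons, (mem_FmF.mp h1).1], h3⟩
  have hCsub : C ⊆ FmF w (m+1) := by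
    intro x hx
    obtain ⟨u, _, rfl⟩ := Finset.mem_image.mp hx
    exact hextmem u.1 u.2
  have hdAB : Disjoint A B := by
    rw [Finset.disjoint_left]
    rintro x hxA hxB
    obtain ⟨u, _, rfl⟩ := Finset.mem_image.mp hxA
    obtain ⟨u', _, heq⟩ := Finset.mem_image.mp hxB
    have : (1 : Fin 2) = 0 := (List.cons.injEq _ _ _ _ ▸ heq).1
    exact absurd this (by decide)
  have hdABC : Disjoint (A ∪ B) C := by
    rw [Finset.disjoint_left]
    rintro x hxAB hxC
    obtain ⟨v, _, rfl⟩ := Finset.mem_image.mp hxC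
    have hvnotspec : v.1 ∉ specialF w m :=
      (Finset.mem_sdiff.mp (Finset.mem_of_mem_erase v.2)).2
    rcases Finset.mem_union.mp hxAB with hx | hx
    · obtain ⟨u, hu, heq⟩ := Finset.mem_image.mp hx
      have : u = v.1 := (List.cons.injEq _ _ _ _ ▸ heq).2
      exact hvnotspec (this ▸ hu)
    · obtain ⟨u, hu, heq⟩ := Finset.mem_image.mp hx
      have : u = v.1 := (List.cons.injEq _ _ _ _ ▸ heq).2
      exact hvnotspec (this ▸ hu)
  have hcardA : A.card = (specialF w m).card :=
    Finset.card_image_of_injective _ (fun a b h => (List.cons.injEq _ _ _ _ ▸ h).2)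
  have hcardB : B.card = (specialF w m).card :=
    Finset.card_image_of_injective _ (fun a b h => (List.cons.injEq _ _ _ _ ▸ h).2)
  have hcardC : C.card = base.card := by
    rw [hC]
    rw [Finset.card_image_of_injective _ (fun a b h => Subtype.ext
      ((List.cons.injEq _ _ _ _ ▸ h).2))]
    exact Finset.card_attach
  have hunion : (A ∪ B ∪ C).card = A.card + B.card + C.card := by
    rw [Finset.card_union_of_disjoint hdABC, Finset.card_union_of_disjoint hdAB]
  have hle : (A ∪ B ∪ C).card ≤ (FmF w (m+1)).card := by
    apply Finset.card_le_card
    intro x hx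
    rcases Finset.mem_union.mp hx with hx | hx
    · rcases Finset.mem_union.mp hx with hx | hx
      · exact hAsub hx
      · exact hBsub hx
    · exact hCsub hx
  have hbasecard : (FmF w m).card ≤ base.card + (specialF w m).card + 1 := by
    have hsd : ((FmF w m) \ (specialF w m)).card + (specialF w m).card = (FmF w m).card :=
      Finset.card_sdiff_add_card_eq_card (Finset.filter_subset _ _)
    have h2 : ((FmF w m) \ (specialF w m)).card ≤ base.card + 1 := by
      by_cases hp : pref ∈ (FmF w m) \ (specialF w m)
      · have := Finset.card_erase_add_one hp
        rw [hbase]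
        omega
      · rw [hbase, Finset.erase_eq_of_notMem hp]
        omega
    omega
  have hspecle : (specialF w m).card ≤ (FmF w m).card :=
    Finset.card_le_card (Finset.filter_subset _ _)
  have hm1 := FmF_card hst hm
  have hm2 := FmF_card hst (m := m + 1) (by omega)
  omega

theorem extF_card_ge {w : ℕ → Fin 2} (hst : ∀ k, 1 ≤ k → Comp w k = k + 1)
    {m : ℕ} (hm : 1 ≤ m) : m ≤ (extF w m).card := by
  classical
  have hsub : (FmF w m) \ (extF w m) ⊆ {List.ofFn (fun j : Fin m => w j)} := by
    intro u hu
    rw [Finset.mem_sdiff] at hu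
    obtain ⟨h1, h2⟩ := hu
    rw [Finset.mem_singleton]
    by_contra hne
    obtain ⟨b, hb⟩ := exists_left_ext h1 hne
    exact h2 (Finset.mem_filter.mpr ⟨h1, ⟨b, (mem_FmF.mp hb).2⟩⟩)
  have h3 : (FmF w m).card ≤ ((FmF w m) \ (extF w m)).card + (extF w m).card :=
    Finset.card_le_card_sdiff_add_card
  have h4 : ((FmF w m) \ (extF w m)).card ≤ 1 := by
    have := Finset.card_le_card hsub
    simpa using this
  have hm1 := FmF_card hst hm
  omega
/-! ### Part 12: the upper bound -/

set_option linter.unusedSectionVars false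

open Classical in
noncomputable def canonF (w : ℕ → Fin 2) (n : ℕ) : Finset (QW F w n) :=
  ((specialF w (n-2)) ×ˢ (Finset.range n) ×ˢ (Finset.range n)).image
      (fun z => cls F w n (monoN F (candT n z.1 z.2.1 z.2.2)))
    ∪ ((FmF w (n-2)) ×ˢ (Finset.range n)).image
      (fun z => cls F w n (monoN F (candT n z.1 z.2 (pickNE z.2))))
    ∪ ((FmF w (n-2)) ×ˢ (Finset.range n)).image
      (fun z => cls F w n (monoN F (candT n z.1 (pickNE z.2) z.2)))

theorem cand_mem_canon {w : ℕ → Fin 2} {n : ℕ} (hn : 5 ≤ n) {u : List (Fin 2)} {i j : ℕ}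
    (hu : u.length = n - 2) (hi : i < n) (hj : j < n) (hij : i ≠ j) (hfac : IsFactor u w) :
    cls F w n (monoN F (candT n u i j)) ∈ (canonF F w n : Set (QW F w n)) := by
  classical
  have humem : u ∈ FmF w (n-2) := mem_FmF.mpr ⟨hu, hfac⟩
  rw [Finset.mem_coe, canonF]
  by_cases h0 : IsFactor ((0:Fin 2)::u) w <;> by_cases h1 : IsFactor ((1:Fin 2)::u) w
  · refine Finset.mem_union.mpr (Or.inl (Finset.mem_union.mpr (Or.inl ?_)))
    refine Finset.mem_image.mpr ⟨(u, i, j), ?_, rfl⟩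
    rw [Finset.mem_product]
    refine ⟨Finset.mem_filter.mpr ⟨humem, h0, h1⟩, ?_⟩
    rw [Finset.mem_product]
    exact ⟨Finset.mem_range.mpr hi, Finset.mem_range.mpr hj⟩
  · -- 0 factor, 1 not: change the left cherry variable
    rw [cls_changeLeft F hu hi (pickNE_lt (by omega) j) hj hij (pickNE_ne j) h1]
    refine Finset.mem_union.mpr (Or.inr ?_)
    refine Finset.mem_image.mpr ⟨(u, j), ?_, rfl⟩
    rw [Finset.mem_product]
    exact ⟨humem, Finset.mem_range.mpr hj⟩
  · -- 1 factor, 0 not: change the right cherry variable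
    rw [cls_changeRight F hu hi hj (pickNE_lt (by omega) i) hij
      (Ne.symm (pickNE_ne i)) h0]
    refine Finset.mem_union.mpr (Or.inl (Finset.mem_union.mpr (Or.inr ?_)))
    refine Finset.mem_image.mpr ⟨(u, i), ?_, rfl⟩
    rw [Finset.mem_product]
    exact ⟨humem, Finset.mem_range.mpr hi⟩
  · -- neither
    rw [cls_changeRight F hu hi hj (pickNE_lt (by omega) i) hij
      (Ne.symm (pickNE_ne i)) h0]
    rw [cls_changeLeft F hu hi (pickNE_lt (by omega) (pickNE i)) (pickNE_lt (by omega) i)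
      (Ne.symm (pickNE_ne i)) (pickNE_ne (pickNE i)) h1]
    refine Finset.mem_union.mpr (Or.inr ?_)
    refine Finset.mem_image.mpr ⟨(u, pickNE i), ?_, rfl⟩
    rw [Finset.mem_product]
    exact ⟨humem, Finset.mem_range.mpr (pickNE_lt (by omega) i)⟩

theorem span_canonF_top {w : ℕ → Fin 2} {n : ℕ} (hn : 5 ≤ n) :
    Submodule.span F ((canonF F w n : Set (QW F w n))) = ⊤ := by
  rw [Submodule.eq_top_iff']
  intro q
  obtain ⟨p, rfl⟩ := Submodule.Quotient.mk_surjective _ q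
  have hp : Submodule.Quotient.mk p = cls F w n ↑p := by
    rw [cls_apply F w n p.2]
  rw [hp]
  refine cls_span F _ ?_ ↑p p.2
  intro t hocc
  rcases gen_reduce F hn t hocc with h | ⟨u, i, j, hu, hi, hj, hij, hfac, heq⟩
  · rw [h]
    exact Submodule.zero_mem _
  · rw [heq]
    exact Submodule.subset_span (cand_mem_canon F hn hu hi hj hij hfac)

theorem QW_module_finite {w : ℕ → Fin 2} {n : ℕ} (hn : 5 ≤ n) :
    Module.Finite F (QW F w n) := by
  rw [Module.finite_def]
  exact ⟨canonF F w n, span_canonF_top F hn⟩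

theorem canonF_card_le {w : ℕ → Fin 2} (hst : ∀ k, 1 ≤ k → Comp w k = k + 1)
    {n : ℕ} (hn : 5 ≤ n) : (canonF F w n).card ≤ 4 * n^2 := by
  classical
  have hm : 1 ≤ n - 2 := by omega
  have hs := specialF_card_le hst hm
  have hf := FmF_card hst hm
  have h1 := Finset.card_union_le
    (((specialF w (n-2)) ×ˢ (Finset.range n) ×ˢ (Finset.range n)).image
      (fun z => cls F w n (monoN F (candT n z.1 z.2.1 z.2.2)))
    ∪ ((FmF w (n-2)) ×ˢ (Finset.range n)).image
      (fun z => cls F w n (monoN F (candT n z.1 z.2 (pickNE z.2)))))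
    (((FmF w (n-2)) ×ˢ (Finset.range n)).image
      (fun z => cls F w n (monoN F (candT n z.1 (pickNE z.2) z.2))))
  have h2 := Finset.card_union_le
    (((specialF w (n-2)) ×ˢ (Finset.range n) ×ˢ (Finset.range n)).image
      (fun z => cls F w n (monoN F (candT n z.1 z.2.1 z.2.2))))
    (((FmF w (n-2)) ×ˢ (Finset.range n)).image
      (fun z => cls F w n (monoN F (candT n z.1 z.2 (pickNE z.2)))))
  have h3 := Finset.card_image_le (s := (specialF w (n-2)) ×ˢ (Finset.range n) ×ˢ (Finset.range n))
    (f := fun z => cls F w n (monoN F (candT n z.1 z.2.1 z.2.2)))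
  have h4 := Finset.card_image_le (s := (FmF w (n-2)) ×ˢ (Finset.range n))
    (f := fun z => cls F w n (monoN F (candT n z.1 z.2 (pickNE z.2))))
  have h5 := Finset.card_image_le (s := (FmF w (n-2)) ×ˢ (Finset.range n))
    (f := fun z => cls F w n (monoN F (candT n z.1 (pickNE z.2) z.2)))
  rw [Finset.card_product, Finset.card_product, Finset.card_range] at h3
  rw [Finset.card_product, Finset.card_range] at h4 h5
  rw [canonF]
  have hsn : (specialF w (n-2)).card * (n * n) ≤ 2 * (n * n) :=
    Nat.mul_le_mul_right _ hs
  have hfn : (FmF w (n-2)).card * n ≤ n * n := by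
    rw [hf]
    have : n - 2 + 1 ≤ n := by omega
    exact Nat.mul_le_mul_right _ this
  have hnn : n^2 = n * n := sq n
  omega

theorem codimW_upper {w : ℕ → Fin 2} (hst : ∀ k, 1 ≤ k → Comp w k = k + 1)
    {n : ℕ} (hn : 5 ≤ n) : codimW F w n ≤ 4 * n^2 := by
  have htop := span_canonF_top (w := w) (n := n) F hn
  have h1 : codimW F w n = Module.finrank F (QW F w n) := rfl
  rw [h1, ← finrank_top F (QW F w n), ← htop]
  exact le_trans (finrank_span_finset_le_card (canonF F w n)) (canonF_card_le F hst hn)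
/-! ### Part 13: the lower bound -/

set_option linter.unusedSectionVars false

noncomputable def evalAt (i : ℕ) : FreeN F →ₗ[F] FA F :=
  LinearMapClass.linearMap (FreeNonUnitalNonAssocAlgebra.lift F
    (fun k => mono F (if k = i then aSq else FreeMagma.of ())))

noncomputable def coordAt (m : FreeMagma Unit) : FA F →ₗ[F] F where
  toFun x := x.coeff m
  map_add' x y := Finsupp.add_apply _ _ _
  map_smul' c x := Finsupp.smul_apply _ _ _

theorem coordAt_mono (m m' : FreeMagma Unit) :
    coordAt F m' (mono F m) = if m = m' then 1 else 0 := mono_coord F m m'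

theorem evalAt_monoN (i₀ : ℕ) (t : FreeMagma ℕ) :
    evalAt F i₀ (monoN F t)
      = mono F (subst t (fun k => if k = i₀ then aSq else FreeMagma.of ())) :=
  lift_mono_subst F (fun k => if k = i₀ then aSq else FreeMagma.of ()) t

theorem subst_candT_at_i {n i j : ℕ} {u : List (Fin 2)} (hu : u.length = n - 2)
    (hi : i < n) (hj : j < n) (hij : i ≠ j) :
    subst (candT n u i j) (fun k => if k = i then aSq else FreeMagma.of ())
      = chain aSq ((1:Fin 2) :: u) := by
  rw [candT, subst_chainN_leaf _ _ _ (fun k hk => by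
      rw [snd_zip_others hu hi hj hij, mem_others] at hk
      exact if_neg hk.2.1), fst_zip_others hu hi hj hij,
    subst_mul, subst_of, subst_of, if_pos rfl, if_neg (fun h => hij h.symm)]
  have e1 : aSq * FreeMagma.of () = chain aSq [1] := by
    have := cat_snoc1 []
    rwa [chain_nil, List.nil_append] at this
  rw [e1, ← chain_append, List.singleton_append]

theorem subst_candT_at_j {n i j : ℕ} {u : List (Fin 2)} (hu : u.length = n - 2)
    (hi : i < n) (hj : j < n) (hij : i ≠ j) :
    subst (candT n u i j) (fun k => if k = j then aSq else FreeMagma.of ())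
      = chain aSq ((0:Fin 2) :: u) := by
  rw [candT, subst_chainN_leaf _ _ _ (fun k hk => by
      rw [snd_zip_others hu hi hj hij, mem_others] at hk
      exact if_neg hk.2.2), fst_zip_others hu hi hj hij,
    subst_mul, subst_of, subst_of, if_pos rfl, if_neg hij]
  have e1 : FreeMagma.of () * aSq = chain aSq [0] := by
    have := cat_snoc0 []
    rwa [chain_nil, List.nil_append] at this
  rw [e1, ← chain_append, List.singleton_append]

theorem subst_candT_chainvar {n i j i₀ : ℕ} {u : List (Fin 2)} (hu : u.length = n - 2)
    (hi : i < n) (hj : j < n) (hij : i ≠ j) (hi₀ : i₀ < n) (h1 : i₀ ≠ i) (h2 : i₀ ≠ j) :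
    2 ≤ countSq (subst (candT n u i j)
      (fun k => if k = i₀ then aSq else FreeMagma.of ())) := by
  refine two_le_countSq_chainN_var (k := i₀) (by
    rw [snd_zip_others hu hi hj hij, mem_others]
    exact ⟨hi₀, h1, h2⟩) ?_
  rw [if_pos rfl]
  rfl

/-- the value of the coordinate functional on an evaluated canonical monomial -/
theorem coord_eval_candT {n i j i₀ : ℕ} {u v : List (Fin 2)} (hu : u.length = n - 2)
    (hi : i < n) (hj : j < n) (hij : i ≠ j) (hi₀ : i₀ < n) :
    coordAt F (chain aSq v) (evalAt F i₀ (monoN F (candT n u i j)))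
      = if (i₀ = i ∧ v = (1:Fin 2) :: u) ∨ (i₀ = j ∧ v = (0:Fin 2) :: u)
        then 1 else 0 := by
  rw [evalAt_monoN, coordAt_mono]
  by_cases hii : i₀ = i
  · subst hii
    rw [subst_candT_at_i hu hi hj hij]
    by_cases hv : v = (1:Fin 2) :: u
    · rw [if_pos (Or.inl ⟨rfl, hv⟩), if_pos (by rw [hv])]
    · rw [if_neg ?_, if_neg ?_]
      · rintro (⟨_, hc⟩ | ⟨hc, _⟩)
        · exact hv hc
        · exact hij hc
      · intro hc
        exact hv (chain_aSq_inj _ _ hc).symm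
  · by_cases hjj : i₀ = j
    · subst hjj
      rw [subst_candT_at_j hu hi hj hij]
      by_cases hv : v = (0:Fin 2) :: u
      · rw [if_pos (Or.inr ⟨rfl, hv⟩), if_pos (by rw [hv])]
      · rw [if_neg ?_, if_neg ?_]
        · rintro (⟨hc, _⟩ | ⟨_, hc⟩)
          · exact hii hc
          · exact hv hc
        · intro hc
          exact hv (chain_aSq_inj _ _ hc).symm
    · have hne : ¬ (subst (candT n u i j) (fun k => if k = i₀ then aSq else FreeMagma.of ())
          = chain aSq v) := by
        intro hc
        have h2 := subst_candT_chainvar hu hi hj hij hi₀ hii hjj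
        rw [hc, countSq_chain_aSq] at h2
        omega
      rw [if_neg hne, if_neg (by rintro (⟨hc, _⟩ | ⟨hc, _⟩); exacts [hii hc, hjj hc])]
/-! ### Part 14: assembling the lower bound -/

set_option linter.unusedSectionVars false

theorem fin2_cases (b : Fin 2) : b = 0 ∨ b = 1 := by
  fin_cases b
  · exact Or.inl rfl
  · exact Or.inr rfl

theorem codimW_lower {w : ℕ → Fin 2} (hst : ∀ k, 1 ≤ k → Comp w k = k + 1)
    {n : ℕ} (hn : 5 ≤ n) : n * (n - 2) ≤ codimW F w n := by
  haveI hft : Fintype {u : List (Fin 2) // u ∈ extF w (n-2)} := Finset.Subtype.fintype _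
  classical
  have hm1 : 1 ≤ n - 2 := by omega
  have hbit : ∀ u : {u : List (Fin 2) // u ∈ extF w (n-2)},
      ∃ b : Fin 2, IsFactor (b :: u.1) w := fun u => (Finset.mem_filter.mp u.2).2
  choose bit hbitspec using hbit
  have hulen : ∀ u : {u : List (Fin 2) // u ∈ extF w (n-2)}, u.1.length = n - 2 :=
    fun u => (mem_FmF.mp (Finset.mem_filter.mp u.2).1).1
  have hKer : ∀ (i₀ : ℕ) (v : List (Fin 2)), IsFactor v w →
      Submodule.comap (Pmulti F n).subtype (IdW F w) ≤
        LinearMap.ker ((coordAt F (chain aSq v)).comp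
          ((evalAt F i₀).comp (Pmulti F n).subtype)) := by
    intro i₀ v hv x hx
    rw [Submodule.mem_comap] at hx
    rw [LinearMap.mem_ker, LinearMap.comp_apply, LinearMap.comp_apply]
    have hrel : evalAt F i₀ ((Pmulti F n).subtype x) ∈ relIW F w :=
      (mem_IdW_iff F w _).mp hx _
    exact relIW_coord_eq_zero F (not_badMono_chain hv) hrel
  let φ : (Fin n × {u : List (Fin 2) // u ∈ extF w (n-2)}) → (QW F w n →ₗ[F] F) := fun k =>
    Submodule.liftQ _ _ (hKer ↑k.1 (bit k.2 :: k.2.1) (hbitspec k.2))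
  let ψ : (Fin n × {u : List (Fin 2) // u ∈ extF w (n-2)}) → QW F w n := fun k =>
    if bit k.2 = 1 then cls F w n (monoN F (candT n k.2.1 ↑k.1 (pickNE ↑k.1)))
    else cls F w n (monoN F (candT n k.2.1 (pickNE ↑k.1) ↑k.1))
  have hψφ : ∀ k k', φ k' (ψ k) = if k = k' then 1 else 0 := by
    intro k k'
    have hilt : (↑k.1 : ℕ) < n := k.1.2
    have hplt : pickNE ↑k.1 < n := pickNE_lt (by omega) _
    have hpne : (↑k.1 : ℕ) ≠ pickNE ↑k.1 := Ne.symm (pickNE_ne _)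
    have hult := hulen k.2
    have hi'lt : (↑k'.1 : ℕ) < n := k'.1.2
    have hφeval : ∀ (x : FreeN F) (hx : x ∈ Pmulti F n),
        φ k' (cls F w n x)
          = coordAt F (chain aSq (bit k'.2 :: k'.2.1)) (evalAt F ↑k'.1 x) := by
      intro x hx
      show Submodule.liftQ _ _ _ (cls F w n x) = _
      rw [cls_apply F w n hx, Submodule.liftQ_apply, LinearMap.comp_apply,
        LinearMap.comp_apply]
      rfl
    rcases fin2_cases (bit k.2) with hb | hb
    · have hψk : ψ k = cls F w n (monoN F (candT n k.2.1 (pickNE ↑k.1) ↑k.1)) := by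
        show (if bit k.2 = 1 then _ else _) = _
        rw [if_neg (by rw [hb]; decide)]
      rw [hψk, hφeval _ (candT_mem_Pmulti F hult hplt hilt (pickNE_ne _)),
        coord_eval_candT F hult hplt hilt (pickNE_ne _) hi'lt]
      by_cases hkk : k = k'
      · subst hkk
        rw [if_pos (Or.inr ⟨rfl, by rw [hb]⟩), if_pos rfl]
      · have hC : ¬ (((↑k'.1 : ℕ) = pickNE ↑k.1 ∧ bit k'.2 :: k'.2.1 = (1:Fin 2) :: k.2.1)
            ∨ ((↑k'.1 : ℕ) = ↑k.1 ∧ bit k'.2 :: k'.2.1 = (0:Fin 2) :: k.2.1)) := by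
          rintro (⟨hi', hcons⟩ | ⟨hi', hcons⟩)
          · have h1 : bit k'.2 = 1 ∧ k'.2.1 = k.2.1 := by
              rw [List.cons.injEq] at hcons
              exact hcons
            have hu' : k'.2 = k.2 := Subtype.ext h1.2
            rw [hu', hb] at h1
            exact absurd h1.1 (by decide)
          · have h1 : bit k'.2 = 0 ∧ k'.2.1 = k.2.1 := by
              rw [List.cons.injEq] at hcons
              exact hcons
            have hu' : k'.2 = k.2 := Subtype.ext h1.2
            have hii : k'.1 = k.1 := Fin.ext hi'
            exact hkk (Prod.ext hii.symm hu'.symm)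
        rw [if_neg hC, if_neg hkk]
    · have hψk : ψ k = cls F w n (monoN F (candT n k.2.1 ↑k.1 (pickNE ↑k.1))) := by
        show (if bit k.2 = 1 then _ else _) = _
        rw [if_pos hb]
      rw [hψk, hφeval _ (candT_mem_Pmulti F hult hilt hplt hpne),
        coord_eval_candT F hult hilt hplt hpne hi'lt]
      by_cases hkk : k = k'
      · subst hkk
        rw [if_pos (Or.inl ⟨rfl, by rw [hb]⟩), if_pos rfl]
      · have hC : ¬ (((↑k'.1 : ℕ) = ↑k.1 ∧ bit k'.2 :: k'.2.1 = (1:Fin 2) :: k.2.1)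
            ∨ ((↑k'.1 : ℕ) = pickNE ↑k.1 ∧ bit k'.2 :: k'.2.1 = (0:Fin 2) :: k.2.1)) := by
          rintro (⟨hi', hcons⟩ | ⟨hi', hcons⟩)
          · have h1 : bit k'.2 = 1 ∧ k'.2.1 = k.2.1 := by
              rw [List.cons.injEq] at hcons
              exact hcons
            have hu' : k'.2 = k.2 := Subtype.ext h1.2
            have hii : k'.1 = k.1 := Fin.ext hi'
            exact hkk (Prod.ext hii.symm hu'.symm)
          · have h1 : bit k'.2 = 0 ∧ k'.2.1 = k.2.1 := by
              rw [List.cons.injEq] at hcons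
              exact hcons
            have hu' : k'.2 = k.2 := Subtype.ext h1.2
            rw [hu', hb] at h1
            exact absurd h1.1 (by decide)
        rw [if_neg hC, if_neg hkk]
  have hrange : LinearMap.range (LinearMap.pi φ) = ⊤ := by
    rw [Submodule.eq_top_iff']
    intro x
    rw [pi_eq_sum_univ x]
    refine Submodule.sum_mem _ (fun k _ => Submodule.smul_mem _ _ ?_)
    refine LinearMap.mem_range.mpr ⟨ψ k, ?_⟩
    funext k'
    rw [LinearMap.pi_apply]
    exact hψφ k k'
  haveI := QW_module_finite F (w := w) (n := n) hn
  have hr := LinearMap.finrank_range_le (LinearMap.pi φ)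
  rw [hrange, finrank_top, Module.finrank_fintype_fun_eq_card] at hr
  have hcard : Fintype.card (Fin n × {u : List (Fin 2) // u ∈ extF w (n-2)})
      = n * (extF w (n-2)).card := by
    rw [Fintype.card_prod, Fintype.card_fin, Fintype.card_coe]
  have hext := extF_card_ge hst hm1
  have hfin : n * (n-2) ≤ Fintype.card (Fin n × {u : List (Fin 2) // u ∈ extF w (n-2)}) := by
    rw [hcard]
    exact Nat.mul_le_mul_left _ hext
  exact le_trans hfin hr
/-- if `α ∈ (0,1)` is irrational and `w` is a Sturmian word with slope `α`,
then the codimensions of `A_α = A/I_α` grow quadratically: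
`C₁ n² ≤ c_n(A_α) ≤ C₂ n²` for all large `n`. -/
theorem codim_quadratic_growth (α : ℝ) (h0 : 0 < α) (h1 : α < 1)
    (hirr : Irrational α) (w : ℕ → Fin 2)
    (hst : ∀ n : ℕ, 1 ≤ n → Comp w n = n + 1)
    (hslope : Filter.Tendsto (fun n : ℕ => (pcount w n : ℝ) / n) Filter.atTop (nhds α)) :
    ∃ C₁ C₂ : ℝ, 0 < C₁ ∧ 0 < C₂ ∧ ∃ N : ℕ, ∀ n : ℕ, N ≤ n →
      C₁ * n ^ 2 ≤ (codimW F w n : ℝ) ∧ (codimW F w n : ℝ) ≤ C₂ * n ^ 2 := by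
  refine ⟨1/3, 4, by norm_num, by norm_num, 6, fun n hn => ?_⟩
  have hl := codimW_lower F hst (n := n) (by omega)
  have hu := codimW_upper F hst (n := n) (by omega)
  have hc1 : ((n * (n - 2) : ℕ) : ℝ) ≤ (codimW F w n : ℝ) := Nat.cast_le.mpr hl
  have hc2 : (codimW F w n : ℝ) ≤ ((4 * n ^ 2 : ℕ) : ℝ) := Nat.cast_le.mpr hu
  have hn6 : (6 : ℝ) ≤ (n : ℝ) := by exact_mod_cast hn
  constructor
  · refine le_trans ?_ hc1
    have hcast : ((n * (n - 2) : ℕ) : ℝ) = (n : ℝ) * ((n : ℝ) - 2) := by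
      push_cast [Nat.cast_sub (by omega : 2 ≤ n)]
      ring
    rw [hcast]
    nlinarith
  · refine le_trans hc2 ?_
    push_cast
    exact le_refl _
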